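/- arXiv:2302.05409 — 5 statements merged into one kernel-verified Lean document; each statement's English description precedes it below -/
import Mathlib

section
/- Let σ be exponentially distributed with rate r and independent of a strictly positive random variable τ. Define T so that E[T] satisfies the renewal identity for search under exponential resetting; then the mean first passage time with resetting satisfies E[T] = (1 − p)/(r p) where p = P(τ < σ) = E[e^{−rτ}], provided p > 0. -/
open MeasureTheory ProbabilityTheory Real Set

lemma expIntAux {r a : ℝ} (hr : 0 < r) (ha : 0 < a) :
    ∫⁻ t in Set.Ioo 0 a, ENNReal.ofReal (Real.exp (-r * t)) =
      ENNReal.ofReal ((1 - Real.exp (-r * a)) / r) := by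
  rw [← ofReal_integral_eq_lintegral_ofReal]
  · congr 1
    rw [← MeasureTheory.integral_Ioc_eq_integral_Ioo,
      ← intervalIntegral.integral_of_le ha.le]
    have := intervalIntegral.integral_comp_mul_left (a := 0) (b := a)
      (fun x => Real.exp x) (neg_ne_zero.2 hr.ne')
    simp only [mul_zero] at this
    rw [this, integral_exp]
    rw [smul_eq_mul]
    rw [exp_zero, inv_neg, div_eq_mul_inv]
    ring
  · exact ((continuous_exp.comp (continuous_const.mul continuous_id)).integrableOn_Ioc
      ).mono_set Set.Ioo_subset_Ioc_self
  · filter_upwards with t using (exp_pos _).le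

lemma geomTailAux {p : ℝ} (hp0 : 0 < p) (hp1 : p < 1) (n : ℕ) :
    ∑' k : ℕ, ENNReal.ofReal ((1 - p) ^ (n + k) * p) = ENNReal.ofReal ((1 - p) ^ n) := by
  have h0 : (0:ℝ) ≤ 1 - p := by linarith
  have h1 : 1 - p < 1 := by linarith
  have hsum : Summable (fun k : ℕ => (1 - p) ^ (n + k) * p) := by
    have : (fun k : ℕ => (1 - p) ^ (n + k) * p)
        = fun k : ℕ => ((1 - p) ^ n * p) * (1 - p) ^ k := by
      funext k; rw [pow_add]; ring
    rw [this]
    exact (summable_geometric_of_lt_one h0 h1).mul_left _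
  rw [← ENNReal.ofReal_tsum_of_nonneg (fun k => by positivity) hsum]
  congr 1
  have : (fun k : ℕ => (1 - p) ^ (n + k) * p)
      = fun k : ℕ => ((1 - p) ^ n * p) * (1 - p) ^ k := by
    funext k; rw [pow_add]; ring
  rw [this, tsum_mul_left, tsum_geometric_of_lt_one h0 h1]
  have : 1 - (1 - p) = p := by ring
  rw [this]
  field_simp

/-- Exact mean FPT under exponential resetting: `E[T] = (1-p)/(r p)` where
`T = ∑_{n=1}^R σₙ⁻ + τ⁻`, `R` geometric with success probability `p`,
`σ⁻` has the law of `σ` conditioned on `{σ < τ}`, and `τ⁻` has the law of `τ`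
conditioned on `{τ < σ}`, all independent. -/
theorem mean_fpt_exponential_resetting
    {Ω : Type*} [MeasureSpace Ω] [IsProbabilityMeasure (ℙ : Measure Ω)]
    (r : ℝ) (hr : 0 < r)
    (τ σ : Ω → ℝ) (hτm : Measurable τ) (hσm : Measurable σ)
    (hτpos : ℙ {ω | τ ω ≤ 0} = 0)
    (hστ : IndepFun σ τ ℙ)
    -- σ is exponentially distributed with rate r
    (hσexp : ∀ t : ℝ, 0 ≤ t → ℙ {ω | t < σ ω} = ENNReal.ofReal (Real.exp (-r * t)))
    (p : ℝ) (hp : p = (ℙ {ω | τ ω < σ ω}).toReal) (hp0 : 0 < p)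
    -- the components of T, on the same space
    (R : Ω → ℕ) (σm : ℕ → Ω → ℝ) (τm : Ω → ℝ)
    (hRm : Measurable R) (hσmm : ∀ n, Measurable (σm n)) (hτmm : Measurable τm)
    (hRlaw : ∀ n : ℕ, ℙ {ω | R ω = n} = ENNReal.ofReal ((1 - p) ^ n * p))
    (hσmlaw : ∀ n, ∀ t : ℝ, ℙ {ω | t < σm n ω} =
      ℙ {ω | t < σ ω ∧ σ ω < τ ω} / ℙ {ω | σ ω < τ ω})
    (hτmlaw : ∀ t : ℝ, ℙ {ω | t < τm ω} =
      ℙ {ω | t < τ ω ∧ τ ω < σ ω} / ℙ {ω | τ ω < σ ω})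
    (hiid : iIndepFun σm ℙ)
    (hRind : IndepFun R (fun ω => fun n => σm n ω) ℙ)
    (hτind : IndepFun τm (fun ω => (R ω, fun n => σm n ω)) ℙ)
    (T : Ω → ℝ) (hT : ∀ ω, T ω = (∑ n ∈ Finset.Icc 1 (R ω), σm n ω) + τm ω) :
    ∫ ω, T ω ∂ℙ = (1 - p) / (r * p) := by
  -- notation
  set q : ENNReal := ℙ {ω | σ ω < τ ω} with hq_def
  set pe : ENNReal := ℙ {ω | τ ω < σ ω} with hpe_def
  have hpe_top : pe ≠ ⊤ := measure_ne_top _ _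
  have hq_top : q ≠ ⊤ := measure_ne_top _ _
  -- σ is a.s. positive
  have hσ0 : ℙ {ω | σ ω ≤ 0} = 0 := by
    have h1 := hσexp 0 le_rfl
    simp only [mul_zero, Real.exp_zero, ENNReal.ofReal_one] at h1
    have h2 : {ω | σ ω ≤ 0} = {ω | 0 < σ ω}ᶜ := by ext ω; simp [not_lt]
    rw [h2]
    exact (prob_compl_eq_zero_iff (hσm measurableSet_Ioi)).2 h1
  -- σ has no atoms
  have hatom : ∀ y : ℝ, ℙ {ω | σ ω = y} = 0 := by
    intro y
    rcases le_or_gt y 0 with hy | hy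
    · exact measure_mono_null (fun ω (h : σ ω = y) => le_trans (le_of_eq h) hy) hσ0
    · have key : ∀ n : ℕ, ℙ {ω | σ ω = y} ≤
          ENNReal.ofReal (Real.exp (-r * (y - y / (n + 1))) - Real.exp (-r * y)) := by
        intro n
        have hn1 : (0:ℝ) < (n:ℝ) + 1 := by positivity
        have hε : 0 < y / ((n:ℝ) + 1) := by positivity
        have hεy : y / ((n:ℝ) + 1) ≤ y := by
          apply div_le_self hy.le
          linarith [Nat.cast_nonneg (α := ℝ) n]
        have hm2 : MeasurableSet {ω | y < σ ω} := hσm measurableSet_Ioi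
        have hsplit : ℙ {ω | y - y / ((n:ℝ) + 1) < σ ω}
            = ℙ {ω | y - y / ((n:ℝ) + 1) < σ ω ∧ σ ω ≤ y} + ℙ {ω | y < σ ω} := by
          rw [← measure_union ?_ hm2]
          · congr 1; ext ω; simp only [Set.mem_setOf_eq, Set.mem_union]
            constructor
            · intro h
              rcases le_or_gt (σ ω) y with h2 | h2
              · exact Or.inl ⟨h, h2⟩
              · exact Or.inr h2
            · rintro (⟨h, _⟩ | h)
              · exact h
              · linarith
          · rw [Set.disjoint_left]
            rintro ω ⟨_, h2⟩ h3
            exact absurd h3 (not_lt.2 h2)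
        have hle : ℙ {ω | σ ω = y} ≤ ℙ {ω | y - y / ((n:ℝ) + 1) < σ ω ∧ σ ω ≤ y} :=
          measure_mono (fun ω (h : σ ω = y) => ⟨by rw [h]; linarith, le_of_eq h⟩)
        have h1 : ℙ {ω | y - y / ((n:ℝ) + 1) < σ ω}
            = ENNReal.ofReal (Real.exp (-r * (y - y / ((n:ℝ) + 1)))) := hσexp _ (by linarith)
        have h2 : ℙ {ω | y < σ ω} = ENNReal.ofReal (Real.exp (-r * y)) := hσexp _ hy.le
        have h3 : ℙ {ω | y - y / ((n:ℝ) + 1) < σ ω ∧ σ ω ≤ y}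
            = ENNReal.ofReal (Real.exp (-r * (y - y / ((n:ℝ) + 1))))
              - ENNReal.ofReal (Real.exp (-r * y)) := by
          rw [← h1, ← h2]
          exact ENNReal.eq_sub_of_add_eq (measure_ne_top _ _) hsplit.symm
        exact hle.trans_eq (by rw [h3, ← ENNReal.ofReal_sub _ (Real.exp_pos _).le])
      have hlim : Filter.Tendsto
          (fun n : ℕ => ENNReal.ofReal (Real.exp (-r * (y - y / (n + 1))) - Real.exp (-r * y)))
          Filter.atTop (nhds 0) := by
        rw [← ENNReal.ofReal_zero]
        apply ENNReal.tendsto_ofReal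
        have h0 : Filter.Tendsto (fun n : ℕ => y / ((n:ℝ) + 1)) Filter.atTop (nhds 0) := by
          have := tendsto_one_div_add_atTop_nhds_zero_nat.const_mul y
          simp only [mul_one_div, mul_zero] at this
          exact this
        have h1 : Filter.Tendsto (fun n : ℕ => Real.exp (-r * (y - y / ((n:ℝ) + 1))))
            Filter.atTop (nhds (Real.exp (-r * y))) := by
          have h2 : Filter.Tendsto (fun n : ℕ => -r * (y - y / ((n:ℝ) + 1)))
              Filter.atTop (nhds (-r * (y - 0))) := (tendsto_const_nhds.sub h0).const_mul _
          rw [sub_zero] at h2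
          exact (Real.continuous_exp.tendsto _).comp h2
        have := h1.sub_const (Real.exp (-r * y))
        simpa using this
      have hfin := ge_of_tendsto' hlim key
      exact le_zero_iff.1 hfin
  -- the diagonal is null
  have hdiag : ℙ {ω | σ ω = τ ω} = 0 := by
    have hmap : (Measure.map (fun ω => (τ ω, σ ω)) (ℙ : Measure Ω)) = ((Measure.map τ (ℙ : Measure Ω))).prod ((Measure.map σ (ℙ : Measure Ω))) :=
      (indepFun_iff_map_prod_eq_prod_map_map hτm.aemeasurable hσm.aemeasurable).1 hστ.symm
    have hs : MeasurableSet {x : ℝ × ℝ | x.2 = x.1} :=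
      measurableSet_eq_fun measurable_snd measurable_fst
    have h1 : ℙ {ω | σ ω = τ ω} = ((Measure.map τ (ℙ : Measure Ω))).prod ((Measure.map σ (ℙ : Measure Ω))) {x : ℝ × ℝ | x.2 = x.1} := by
      rw [← hmap, Measure.map_apply (hτm.prodMk hσm) hs]
      rfl
    rw [h1, Measure.prod_apply hs]
    have hz : ∀ y : ℝ, ((Measure.map σ (ℙ : Measure Ω))) (Prod.mk y ⁻¹' {x : ℝ × ℝ | x.2 = x.1}) = 0 := by
      intro y
      have hpre : (Prod.mk y ⁻¹' {x : ℝ × ℝ | x.2 = x.1}) = {y} := by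
        ext b; simp [eq_comm]
      rw [hpre, Measure.map_apply hσm (measurableSet_singleton y)]
      exact hatom y
    calc ∫⁻ y, ((Measure.map σ (ℙ : Measure Ω))) (Prod.mk y ⁻¹' {x : ℝ × ℝ | x.2 = x.1}) ∂((Measure.map τ (ℙ : Measure Ω)))
        = ∫⁻ _, 0 ∂((Measure.map τ (ℙ : Measure Ω))) := lintegral_congr hz
      _ = 0 := lintegral_zero
  -- q + pe = 1
  have hqpe : q + pe = 1 := by
    have hm1 : MeasurableSet {ω | σ ω < τ ω} := measurableSet_lt hσm hτm
    have hm2 : MeasurableSet {ω | τ ω < σ ω} := measurableSet_lt hτm hσm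
    have hd : Disjoint {ω | σ ω < τ ω} {ω | τ ω < σ ω} :=
      Set.disjoint_left.2 fun ω (h1 : σ ω < τ ω) (h2 : τ ω < σ ω) => lt_asymm h1 h2
    have hc : ({ω | σ ω < τ ω} ∪ {ω | τ ω < σ ω})ᶜ = {ω | σ ω = τ ω} := by
      ext ω
      simp only [Set.mem_compl_iff, Set.mem_union, Set.mem_setOf_eq, not_or, not_lt]
      constructor
      · rintro ⟨h1, h2⟩; linarith
      · intro h; constructor <;> linarith
    rw [hq_def, hpe_def, ← measure_union hd hm2]
    exact (prob_compl_eq_zero_iff (hm1.union hm2)).1 (hc ▸ hdiag)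
  have hpeOf : pe = ENNReal.ofReal p := by
    rw [hp, ENNReal.ofReal_toReal hpe_top]
  have hpe0 : pe ≠ 0 := by
    rw [hpeOf]; simpa using (ENNReal.ofReal_pos.2 hp0).ne'
  have hqOf : q = ENNReal.ofReal (1 - p) := by
    have h1 : q = 1 - pe := ENNReal.eq_sub_of_add_eq hpe_top hqpe
    rw [h1, hpeOf, ← ENNReal.ofReal_one, ← ENNReal.ofReal_sub _ hp0.le]
  -- q ≠ 0 (else the law of σm is degenerate, contradiction)
  have hq0 : q ≠ 0 := by
    intro h0
    have hS0 : ∀ t : ℝ, ℙ {ω | t < σm 0 ω} = 0 := by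
      intro t
      rw [hσmlaw 0 t]
      have hz : ℙ {ω | t < σ ω ∧ σ ω < τ ω} = 0 :=
        measure_mono_null (fun ω h => h.2) h0
      rw [hz, ENNReal.zero_div]
    have hu : ℙ (⋃ k : ℕ, {ω | -(k:ℝ) < σm 0 ω}) = 0 :=
      measure_iUnion_null fun k => hS0 _
    have huniv : (⋃ k : ℕ, {ω | -(k:ℝ) < σm 0 ω}) = Set.univ := by
      ext ω
      simp only [Set.mem_iUnion, Set.mem_univ, iff_true, Set.mem_setOf_eq]
      obtain ⟨k, hk⟩ := exists_nat_gt (-σm 0 ω)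
      exact ⟨k, by linarith⟩
    rw [huniv, measure_univ] at hu
    exact one_ne_zero hu
  have hp1 : p < 1 := by
    by_contra h
    exact hq0 (by rw [hqOf, ENNReal.ofReal_eq_zero]; linarith)
  -- τ is a.s. positive
  have hτae : ∀ᵐ ω ∂ℙ, 0 < τ ω := by
    rw [ae_iff]
    have : {ω | ¬ 0 < τ ω} = {ω | τ ω ≤ 0} := by ext ω; simp [not_lt]
    rw [this]; exact hτpos
  -- p = E[exp(-r τ)]
  have pExp : ∫⁻ ω, ENNReal.ofReal (Real.exp (-r * τ ω)) ∂ℙ = pe := by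
    have hmap : (Measure.map (fun ω => (τ ω, σ ω)) (ℙ : Measure Ω))
        = (Measure.map τ (ℙ : Measure Ω)).prod (Measure.map σ (ℙ : Measure Ω)) :=
      (indepFun_iff_map_prod_eq_prod_map_map hτm.aemeasurable hσm.aemeasurable).1 hστ.symm
    have hs : MeasurableSet {x : ℝ × ℝ | x.1 < x.2} :=
      measurableSet_lt measurable_fst measurable_snd
    have h1 : pe = (Measure.map τ (ℙ : Measure Ω)).prod (Measure.map σ (ℙ : Measure Ω))
        {x : ℝ × ℝ | x.1 < x.2} := by
      rw [← hmap, Measure.map_apply (hτm.prodMk hσm) hs, hpe_def]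
      rfl
    have hg : Measurable fun y : ℝ => (Measure.map σ (ℙ : Measure Ω)) (Set.Ioi y) :=
      Antitone.measurable (fun a b hab => measure_mono (Set.Ioi_subset_Ioi hab))
    have h2 : (∫⁻ y, (Measure.map σ (ℙ : Measure Ω))
          (Prod.mk y ⁻¹' {x : ℝ × ℝ | x.1 < x.2}) ∂(Measure.map τ (ℙ : Measure Ω)))
        = ∫⁻ ω, ENNReal.ofReal (Real.exp (-r * τ ω)) ∂ℙ :=
      calc ∫⁻ y, (Measure.map σ (ℙ : Measure Ω))
            (Prod.mk y ⁻¹' {x : ℝ × ℝ | x.1 < x.2}) ∂(Measure.map τ (ℙ : Measure Ω))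
          = ∫⁻ y, (Measure.map σ (ℙ : Measure Ω)) (Set.Ioi y)
              ∂(Measure.map τ (ℙ : Measure Ω)) := lintegral_congr fun y => rfl
        _ = ∫⁻ ω, (Measure.map σ (ℙ : Measure Ω)) (Set.Ioi (τ ω)) ∂ℙ := lintegral_map hg hτm
        _ = ∫⁻ ω, ENNReal.ofReal (Real.exp (-r * τ ω)) ∂ℙ := by
            apply lintegral_congr_ae
            filter_upwards [hτae] with ω hω
            rw [Measure.map_apply hσm measurableSet_Ioi]
            exact hσexp (τ ω) hω.le
    rw [h1, Measure.prod_apply hs]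
    exact h2.symm
  -- the σm n are a.s. nonnegative
  have hσmnn : ∀ n, 0 ≤ᵐ[ℙ] σm n := by
    intro n
    have h1 : ∀ t : ℝ, t < 0 → ℙ {ω | t < σm n ω} = 1 := by
      intro t ht
      rw [hσmlaw n t]
      have he : ℙ {ω | t < σ ω ∧ σ ω < τ ω} = q := by
        apply le_antisymm (measure_mono fun ω h => h.2)
        calc q ≤ ℙ ({ω | t < σ ω ∧ σ ω < τ ω} ∪ {ω | σ ω ≤ 0}) := by
              apply measure_mono
              intro ω (h : σ ω < τ ω)
              simp only [Set.mem_union, Set.mem_setOf_eq]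
              by_cases h0 : t < σ ω
              · exact Or.inl ⟨h0, h⟩
              · exact Or.inr (by push_neg at h0; linarith)
          _ ≤ ℙ {ω | t < σ ω ∧ σ ω < τ ω} + ℙ {ω | σ ω ≤ 0} := measure_union_le _ _
          _ = ℙ {ω | t < σ ω ∧ σ ω < τ ω} := by rw [hσ0, add_zero]
      rw [he, ENNReal.div_self hq0 hq_top]
    have h2 : ℙ {ω | σm n ω < 0} = 0 := by
      have hu : {ω | σm n ω < 0} = ⋃ k : ℕ, {ω | σm n ω ≤ -(1 / ((k:ℝ) + 1))} := by
        ext ω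
        simp only [Set.mem_setOf_eq, Set.mem_iUnion]
        constructor
        · intro h
          obtain ⟨k, hk⟩ := exists_nat_one_div_lt (by linarith : (0:ℝ) < -σm n ω)
          exact ⟨k, by linarith⟩
        · rintro ⟨k, hk⟩
          have hpos : (0:ℝ) < 1 / ((k:ℝ) + 1) := by positivity
          linarith
      rw [hu]
      apply measure_iUnion_null
      intro k
      have h3 := h1 (-(1 / ((k:ℝ) + 1)))
        (neg_lt_zero.2 (by positivity))
      have h4 : {ω | σm n ω ≤ -(1 / ((k:ℝ) + 1))}
          = {ω | -(1 / ((k:ℝ) + 1)) < σm n ω}ᶜ := by ext ω; simp [not_lt]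
      rw [h4]
      exact (prob_compl_eq_zero_iff ((hσmm n) measurableSet_Ioi)).2 h3
    have h5 : ∀ᵐ ω ∂ℙ, ¬ (σm n ω < 0) := by
      rw [ae_iff]
      simpa [not_not] using h2
    filter_upwards [h5] with ω hω using not_lt.1 hω
  -- τm is a.s. nonnegative
  have hτmnn : 0 ≤ᵐ[ℙ] τm := by
    have h1 : ∀ t : ℝ, t < 0 → ℙ {ω | t < τm ω} = 1 := by
      intro t ht
      rw [hτmlaw t]
      have he : ℙ {ω | t < τ ω ∧ τ ω < σ ω} = pe := by
        apply le_antisymm (measure_mono fun ω h => h.2)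
        calc pe ≤ ℙ ({ω | t < τ ω ∧ τ ω < σ ω} ∪ {ω | τ ω ≤ 0}) := by
              apply measure_mono
              intro ω (h : τ ω < σ ω)
              simp only [Set.mem_union, Set.mem_setOf_eq]
              by_cases h0 : t < τ ω
              · exact Or.inl ⟨h0, h⟩
              · exact Or.inr (by push_neg at h0; linarith)
          _ ≤ ℙ {ω | t < τ ω ∧ τ ω < σ ω} + ℙ {ω | τ ω ≤ 0} := measure_union_le _ _
          _ = ℙ {ω | t < τ ω ∧ τ ω < σ ω} := by rw [hτpos, add_zero]
      rw [he, ENNReal.div_self hpe0 hpe_top]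
    have h2 : ℙ {ω | τm ω < 0} = 0 := by
      have hu : {ω | τm ω < 0} = ⋃ k : ℕ, {ω | τm ω ≤ -(1 / ((k:ℝ) + 1))} := by
        ext ω
        simp only [Set.mem_setOf_eq, Set.mem_iUnion]
        constructor
        · intro h
          obtain ⟨k, hk⟩ := exists_nat_one_div_lt (by linarith : (0:ℝ) < -τm ω)
          exact ⟨k, by linarith⟩
        · rintro ⟨k, hk⟩
          have hpos : (0:ℝ) < 1 / ((k:ℝ) + 1) := by positivity
          linarith
      rw [hu]
      apply measure_iUnion_null
      intro k
      have h3 := h1 (-(1 / ((k:ℝ) + 1)))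
        (neg_lt_zero.2 (by positivity))
      have h4 : {ω | τm ω ≤ -(1 / ((k:ℝ) + 1))}
          = {ω | -(1 / ((k:ℝ) + 1)) < τm ω}ᶜ := by ext ω; simp [not_lt]
      rw [h4]
      exact (prob_compl_eq_zero_iff (hτmm measurableSet_Ioi)).2 h3
    have h5 : ∀ᵐ ω ∂ℙ, ¬ (τm ω < 0) := by
      rw [ae_iff]
      simpa [not_not] using h2
    filter_upwards [h5] with ω hω using not_lt.1 hω
  -- abbreviations for the two tail integrals
  set Kσ : ENNReal := ∫⁻ t in Set.Ioi (0:ℝ), ℙ {ω | t < σ ω ∧ σ ω < τ ω} with hKσ_def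
  set Kτ : ENNReal := ∫⁻ t in Set.Ioi (0:ℝ), ℙ {ω | t < τ ω ∧ τ ω < σ ω} with hKτ_def
  -- expectations of σm n and τm via layer cake
  have hSmeas : Measurable (fun t : ℝ => ℙ {ω | t < σ ω ∧ σ ω < τ ω}) := by
    apply Antitone.measurable
    intro a b hab
    exact measure_mono (fun ω h => ⟨lt_of_le_of_lt hab h.1, h.2⟩)
  have hUmeas : Measurable (fun t : ℝ => ℙ {ω | t < τ ω ∧ τ ω < σ ω}) := by
    apply Antitone.measurable
    intro a b hab
    exact measure_mono (fun ω h => ⟨lt_of_le_of_lt hab h.1, h.2⟩)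
  have Jσ : ∀ n, ∫⁻ ω, ENNReal.ofReal (σm n ω) ∂ℙ = Kσ / q := by
    intro n
    rw [MeasureTheory.lintegral_eq_lintegral_meas_lt ℙ (hσmnn n) (hσmm n).aemeasurable]
    calc ∫⁻ t in Set.Ioi (0:ℝ), ℙ {a | t < σm n a}
        = ∫⁻ t in Set.Ioi (0:ℝ), ℙ {ω | t < σ ω ∧ σ ω < τ ω} * q⁻¹ := by
          apply lintegral_congr
          intro t
          rw [hσmlaw n t, ENNReal.div_eq_inv_mul, mul_comm]
      _ = Kσ / q := by
          rw [lintegral_mul_const _ hSmeas, hKσ_def, ENNReal.div_eq_inv_mul, mul_comm]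
  have Jτ : ∫⁻ ω, ENNReal.ofReal (τm ω) ∂ℙ = Kτ / pe := by
    rw [MeasureTheory.lintegral_eq_lintegral_meas_lt ℙ hτmnn hτmm.aemeasurable]
    calc ∫⁻ t in Set.Ioi (0:ℝ), ℙ {a | t < τm a}
        = ∫⁻ t in Set.Ioi (0:ℝ), ℙ {ω | t < τ ω ∧ τ ω < σ ω} * pe⁻¹ := by
          apply lintegral_congr
          intro t
          rw [hτmlaw t, ENNReal.div_eq_inv_mul, mul_comm]
      _ = Kτ / pe := by
          rw [lintegral_mul_const _ hUmeas, hKτ_def, ENNReal.div_eq_inv_mul, mul_comm]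
  -- the sum of the two tails is the tail of the minimum
  have hsum : ∀ t : ℝ, 0 ≤ t →
      ℙ {ω | t < σ ω ∧ σ ω < τ ω} + ℙ {ω | t < τ ω ∧ τ ω < σ ω}
        = ENNReal.ofReal (Real.exp (-r * t)) * ℙ {ω | t < τ ω} := by
    intro t ht
    have hm1 : MeasurableSet {ω | t < σ ω ∧ σ ω < τ ω} :=
      (hσm measurableSet_Ioi).inter (measurableSet_lt hσm hτm)
    have hm2 : MeasurableSet {ω | t < τ ω ∧ τ ω < σ ω} :=
      (hτm measurableSet_Ioi).inter (measurableSet_lt hτm hσm)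
    have hd : Disjoint {ω | t < σ ω ∧ σ ω < τ ω} {ω | t < τ ω ∧ τ ω < σ ω} :=
      Set.disjoint_left.2 fun ω (h1 : t < σ ω ∧ σ ω < τ ω)
        (h2 : t < τ ω ∧ τ ω < σ ω) => lt_asymm h1.2 h2.2
    have hind := hστ.measure_inter_preimage_eq_mul (Set.Ioi t) (Set.Ioi t)
      measurableSet_Ioi measurableSet_Ioi
    have hC : ℙ ({ω | t < σ ω ∧ σ ω < τ ω} ∪ {ω | t < τ ω ∧ τ ω < σ ω})
        = ℙ (σ ⁻¹' Set.Ioi t ∩ τ ⁻¹' Set.Ioi t) := by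
      apply le_antisymm
      · apply measure_mono
        rintro ω (⟨h1, h2⟩ | ⟨h1, h2⟩)
        · exact ⟨h1, lt_trans h1 h2⟩
        · exact ⟨lt_trans h1 h2, h1⟩
      · calc ℙ (σ ⁻¹' Set.Ioi t ∩ τ ⁻¹' Set.Ioi t)
            ≤ ℙ (({ω | t < σ ω ∧ σ ω < τ ω} ∪ {ω | t < τ ω ∧ τ ω < σ ω})
                ∪ {ω | σ ω = τ ω}) := by
              apply measure_mono
              rintro ω ⟨h1, h2⟩
              rcases lt_trichotomy (σ ω) (τ ω) with h3 | h3 | h3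
              · exact Or.inl (Or.inl ⟨h1, h3⟩)
              · exact Or.inr h3
              · exact Or.inl (Or.inr ⟨h2, h3⟩)
          _ ≤ ℙ ({ω | t < σ ω ∧ σ ω < τ ω} ∪ {ω | t < τ ω ∧ τ ω < σ ω})
                + ℙ {ω | σ ω = τ ω} := measure_union_le _ _
          _ = ℙ ({ω | t < σ ω ∧ σ ω < τ ω} ∪ {ω | t < τ ω ∧ τ ω < σ ω}) := by
              rw [hdiag, add_zero]
    rw [← measure_union hd hm2, hC, hind, ← hσexp t ht]
    rfl
  -- the key Fubini computation
  have hkey : ∫⁻ t in Set.Ioi (0:ℝ), ENNReal.ofReal (Real.exp (-r * t)) * ℙ {ω | t < τ ω}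
      = ENNReal.ofReal (1 / r) * (1 - pe) := by
    have hsetP : MeasurableSet {x : ℝ × Ω | x.1 < τ x.2} :=
      measurableSet_lt measurable_fst (hτm.comp measurable_snd)
    have hFm : Measurable (fun x : ℝ × Ω => ENNReal.ofReal (Real.exp (-r * x.1))
        * Set.indicator {x : ℝ × Ω | x.1 < τ x.2} (fun _ => (1:ENNReal)) x) := by
      apply Measurable.mul
      · exact ENNReal.measurable_ofReal.comp
          (Real.continuous_exp.measurable.comp (measurable_fst.const_mul (-r)))
      · exact measurable_const.indicator hsetP
    have hgm : Measurable fun ω => ENNReal.ofReal (1 - Real.exp (-r * τ ω)) :=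
      ENNReal.measurable_ofReal.comp
        (measurable_const.sub (Real.continuous_exp.measurable.comp (hτm.const_mul (-r))))
    calc ∫⁻ t in Set.Ioi (0:ℝ), ENNReal.ofReal (Real.exp (-r * t)) * ℙ {ω | t < τ ω}
        = ∫⁻ t in Set.Ioi (0:ℝ), ∫⁻ ω, ENNReal.ofReal (Real.exp (-r * t))
            * Set.indicator {x : ℝ × Ω | x.1 < τ x.2} (fun _ => (1:ENNReal)) (t, ω) ∂ℙ := by
          apply lintegral_congr
          intro t
          symm
          have hi : ∀ ω, Set.indicator {x : ℝ × Ω | x.1 < τ x.2} (fun _ => (1:ENNReal)) (t, ω)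
              = Set.indicator {ω | t < τ ω} (fun _ => (1:ENNReal)) ω := by
            intro ω
            by_cases h : t < τ ω <;> simp [Set.indicator_apply, h]
          simp_rw [hi]
          have hms : MeasurableSet {ω : Ω | t < τ ω} := hτm measurableSet_Ioi
          rw [lintegral_const_mul _ (measurable_const.indicator hms),
            lintegral_indicator hms, setLIntegral_one]
      _ = ∫⁻ ω, ∫⁻ t in Set.Ioi (0:ℝ), ENNReal.ofReal (Real.exp (-r * t))
            * Set.indicator {x : ℝ × Ω | x.1 < τ x.2} (fun _ => (1:ENNReal)) (t, ω) ∂ℙ :=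
          lintegral_lintegral_swap hFm.aemeasurable
      _ = ∫⁻ ω, ENNReal.ofReal ((1 - Real.exp (-r * τ ω)) / r) ∂ℙ := by
          apply lintegral_congr_ae
          filter_upwards [hτae] with ω hω
          have hind : (fun t : ℝ => ENNReal.ofReal (Real.exp (-r * t))
              * Set.indicator {x : ℝ × Ω | x.1 < τ x.2} (fun _ => (1:ENNReal)) (t, ω))
              = Set.indicator (Set.Iio (τ ω)) (fun t => ENNReal.ofReal (Real.exp (-r * t))) := by
            funext t
            by_cases h : t < τ ω <;> simp [Set.indicator_apply, h]
          rw [hind, lintegral_indicator measurableSet_Iio,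
            Measure.restrict_restrict measurableSet_Iio]
          have hio : Set.Iio (τ ω) ∩ Set.Ioi 0 = Set.Ioo 0 (τ ω) := by
            ext t
            simp only [Set.mem_inter_iff, Set.mem_Iio, Set.mem_Ioi, Set.mem_Ioo]
            tauto
          rw [hio]
          exact expIntAux hr hω
      _ = ENNReal.ofReal (1 / r) * ∫⁻ ω, ENNReal.ofReal (1 - Real.exp (-r * τ ω)) ∂ℙ := by
          rw [← lintegral_const_mul _ hgm]
          apply lintegral_congr
          intro ω
          rw [← ENNReal.ofReal_mul (by positivity : (0:ℝ) ≤ 1 / r)]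
          congr 1
          rw [one_div, inv_mul_eq_div]
      _ = ENNReal.ofReal (1 / r) * (1 - pe) := by
          congr 1
          have h1 : ∫⁻ ω, ENNReal.ofReal (1 - Real.exp (-r * τ ω)) ∂ℙ
              = ∫⁻ ω, (1 - ENNReal.ofReal (Real.exp (-r * τ ω))) ∂ℙ := by
            apply lintegral_congr
            intro ω
            rw [ENNReal.ofReal_sub _ (Real.exp_pos _).le, ENNReal.ofReal_one]
          have hgm2 : Measurable fun ω : Ω => ENNReal.ofReal (Real.exp (-r * τ ω)) :=
            ENNReal.measurable_ofReal.comp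
              (Real.continuous_exp.measurable.comp (hτm.const_mul (-r)))
          rw [h1, lintegral_sub hgm2
            (by rw [pExp]; exact hpe_top)
            (by
              filter_upwards [hτae] with ω hω
              calc ENNReal.ofReal (Real.exp (-r * τ ω))
                  ≤ ENNReal.ofReal 1 := ENNReal.ofReal_le_ofReal
                    (Real.exp_le_one_iff.2 (by nlinarith))
                _ = 1 := ENNReal.ofReal_one)]
          rw [lintegral_one, measure_univ, pExp]
  have hKsum : Kσ + Kτ = ENNReal.ofReal (1 / r) * (1 - pe) := by
    rw [← hkey, hKσ_def, hKτ_def, ← lintegral_add_left hSmeas]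
    exact setLIntegral_congr_fun measurableSet_Ioi
      (fun t ht => hsum t (le_of_lt ht))
  -- tail probabilities of R
  have hRge : ∀ n : ℕ, ℙ {ω | n ≤ R ω} = ENNReal.ofReal ((1 - p) ^ n) := by
    intro n
    have hset : {ω | n ≤ R ω} = ⋃ k : ℕ, {ω | R ω = n + k} := by
      ext ω
      simp only [Set.mem_setOf_eq, Set.mem_iUnion]
      constructor
      · intro h; exact ⟨R ω - n, by omega⟩
      · rintro ⟨k, hk⟩; omega
    rw [hset, measure_iUnion ?_ ?_]
    · simp_rw [hRlaw]
      exact geomTailAux hp0 hp1 n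
    · intro i j hij
      rw [Function.onFun, Set.disjoint_left]
      intro ω h1 h2
      have e1 : R ω = n + i := h1
      have e2 : R ω = n + j := h2
      exact hij (by omega)
    · intro k
      exact hRm (MeasurableSet.of_discrete : MeasurableSet {m : ℕ | m = n + k})
  -- expectation of the random sum
  have hG : ∫⁻ ω, (∑ n ∈ Finset.Icc 1 (R ω), ENNReal.ofReal (σm n ω)) ∂ℙ
      = ENNReal.ofReal ((1 - p) / p) * (Kσ / q) := by
    classical
    have hmeas_ind : ∀ n : ℕ, MeasurableSet {ω | n ≤ R ω} := fun n =>
      hRm (MeasurableSet.of_discrete : MeasurableSet {m : ℕ | n ≤ m})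
    set h : ℕ → Ω → ENNReal := fun n ω =>
      if 1 ≤ n then Set.indicator {ω' | n ≤ R ω'} (fun ω' => ENNReal.ofReal (σm n ω')) ω
      else 0 with hh
    have hG1 : ∀ ω, (∑ n ∈ Finset.Icc 1 (R ω), ENNReal.ofReal (σm n ω)) = ∑' n, h n ω := by
      intro ω
      have hvan : ∀ n ∉ Finset.Icc 1 (R ω), h n ω = 0 := by
        intro n hn
        rw [Finset.mem_Icc] at hn
        simp only [hh]
        by_cases h1 : 1 ≤ n
        · have h2 : ¬ n ≤ R ω := fun h2 => hn ⟨h1, h2⟩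
          rw [if_pos h1, Set.indicator_of_notMem (show ω ∉ {ω' | n ≤ R ω'} from h2)]
        · rw [if_neg h1]
      calc ∑ n ∈ Finset.Icc 1 (R ω), ENNReal.ofReal (σm n ω)
          = ∑ n ∈ Finset.Icc 1 (R ω), h n ω := by
            apply Finset.sum_congr rfl
            intro n hn
            rw [Finset.mem_Icc] at hn
            simp only [hh]
            rw [if_pos hn.1, Set.indicator_of_mem (show ω ∈ {ω' | n ≤ R ω'} from hn.2)]
        _ = ∑' n, h n ω := (tsum_eq_sum hvan).symm
    have hterm : ∀ n : ℕ, ∫⁻ ω, h (n+1) ω ∂ℙ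
        = ENNReal.ofReal ((1 - p) ^ (n+1)) * (Kσ / q) := by
      intro n
      have hind1 : IndepFun R (σm (n+1)) ℙ :=
        hRind.comp measurable_id (measurable_pi_apply (n+1))
      have hind2 : IndepFun (fun ω => if n+1 ≤ R ω then (1:ENNReal) else 0)
          (fun ω => ENNReal.ofReal (σm (n+1) ω)) ℙ :=
        hind1.comp (Measurable.of_discrete (f := fun k : ℕ => if n+1 ≤ k then (1:ENNReal) else 0))
          ENNReal.measurable_ofReal
      have heq : (fun ω => h (n+1) ω)
          = fun ω => (if n+1 ≤ R ω then (1:ENNReal) else 0) * ENNReal.ofReal (σm (n+1) ω) := by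
        funext ω
        simp only [hh, if_pos (Nat.le_add_left 1 n)]
        by_cases hmem : n+1 ≤ R ω
        · rw [Set.indicator_of_mem (show ω ∈ {ω' | n+1 ≤ R ω'} from hmem), if_pos hmem, one_mul]
        · rw [Set.indicator_of_notMem (show ω ∉ {ω' | n+1 ≤ R ω'} from hmem), if_neg hmem, zero_mul]
      have hmf : Measurable (fun ω => if n+1 ≤ R ω then (1:ENNReal) else 0) :=
        (Measurable.of_discrete (f := fun k : ℕ => if n+1 ≤ k then (1:ENNReal) else 0)).comp hRm
      have hmg : Measurable (fun ω => ENNReal.ofReal (σm (n+1) ω)) :=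
        ENNReal.measurable_ofReal.comp (hσmm (n+1))
      rw [heq, lintegral_mul_eq_lintegral_mul_lintegral_of_indepFun'' hmf.aemeasurable
        hmg.aemeasurable hind2]
      have hfirst : ∫⁻ ω, (if n+1 ≤ R ω then (1:ENNReal) else 0) ∂ℙ
          = ENNReal.ofReal ((1 - p) ^ (n+1)) := by
        have hif : (fun ω => if n+1 ≤ R ω then (1:ENNReal) else 0)
            = Set.indicator {ω | n+1 ≤ R ω} (fun _ => (1:ENNReal)) := by
          funext ω
          by_cases hmem : n+1 ≤ R ω <;> simp [Set.indicator_apply, hmem] <;> omega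
        rw [hif, lintegral_indicator (hmeas_ind (n+1)), setLIntegral_one, hRge (n+1)]
      rw [hfirst, Jσ (n+1)]
    calc ∫⁻ ω, (∑ n ∈ Finset.Icc 1 (R ω), ENNReal.ofReal (σm n ω)) ∂ℙ
        = ∫⁻ ω, ∑' n, h n ω ∂ℙ := lintegral_congr hG1
      _ = ∑' n, ∫⁻ ω, h n ω ∂ℙ := by
          apply lintegral_tsum
          intro n
          simp only [hh]
          split_ifs with h1
          · exact ((ENNReal.measurable_ofReal.comp (hσmm n)).indicator
              (hmeas_ind n)).aemeasurable
          · exact aemeasurable_const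
      _ = (∫⁻ ω, h 0 ω ∂ℙ) + ∑' n, ∫⁻ ω, h (n+1) ω ∂ℙ :=
          tsum_eq_zero_add' ENNReal.summable
      _ = ∑' n, ∫⁻ ω, h (n+1) ω ∂ℙ := by
          simp only [hh]
          norm_num
      _ = ENNReal.ofReal ((1 - p) / p) * (Kσ / q) := by
          simp_rw [hterm]
          rw [ENNReal.tsum_mul_right]
          congr 1
          have hsummable : Summable (fun n : ℕ => (1 - p) ^ (n + 1)) := by
            have h1 : (fun n : ℕ => (1-p) ^ (n+1)) = fun n : ℕ => (1-p) * (1-p) ^ n := by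
              funext n; ring
            rw [h1]
            exact (summable_geometric_of_lt_one (by linarith) (by linarith)).mul_left _
          rw [← ENNReal.ofReal_tsum_of_nonneg (fun n => pow_nonneg (by linarith) _) hsummable]
          congr 1
          have h1 : (fun n : ℕ => (1-p) ^ (n+1)) = fun n : ℕ => (1-p) * (1-p) ^ n := by
            funext n; ring
          rw [h1, tsum_mul_left, tsum_geometric_of_lt_one (by linarith) (by linarith)]
          have h2 : 1 - (1 - p) = p := by ring
          rw [h2, div_eq_mul_inv]
  -- measurability of the random sum (real-valued)
  have hsumT : Measurable (fun ω => ∑ n ∈ Finset.Icc 1 (R ω), σm n ω) := by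
    have : (fun ω => ∑ n ∈ Finset.Icc 1 (R ω), σm n ω)
        = (fun x : Ω × ℕ => ∑ n ∈ Finset.Icc 1 x.2, σm n x.1) ∘ (fun ω => (ω, R ω)) := rfl
    rw [this]
    exact (measurable_from_prod_countable_left
      (fun k => by simpa using Finset.measurable_sum (Finset.Icc 1 k) fun n _ => hσmm n)).comp
      (measurable_id.prodMk hRm)
  have hTm : Measurable T := by
    have : T = fun ω => (∑ n ∈ Finset.Icc 1 (R ω), σm n ω) + τm ω := funext hT
    rw [this]; exact hsumT.add hτmm
  -- a.e. nonnegativity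
  have hae : ∀ᵐ ω ∂ℙ, (∀ n, 0 ≤ σm n ω) ∧ 0 ≤ τm ω :=
    (ae_all_iff.2 hσmnn).and hτmnn
  have hTnn : 0 ≤ᵐ[ℙ] T := by
    filter_upwards [hae] with ω hω
    rw [hT ω]
    exact add_nonneg (Finset.sum_nonneg fun n _ => hω.1 n) hω.2
  -- main computation
  rw [MeasureTheory.integral_eq_lintegral_of_nonneg_ae hTnn hTm.aestronglyMeasurable]
  have hof : (fun ω => ENNReal.ofReal (T ω)) =ᵐ[ℙ]
      (fun ω => (∑ n ∈ Finset.Icc 1 (R ω), ENNReal.ofReal (σm n ω))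
        + ENNReal.ofReal (τm ω)) := by
    filter_upwards [hae] with ω hω
    rw [hT ω, ENNReal.ofReal_add (Finset.sum_nonneg fun n _ => hω.1 n) hω.2,
      ENNReal.ofReal_sum_of_nonneg (fun n _ => hω.1 n)]
  have hsumTe : Measurable (fun ω => ∑ n ∈ Finset.Icc 1 (R ω), ENNReal.ofReal (σm n ω)) := by
    have : (fun ω => ∑ n ∈ Finset.Icc 1 (R ω), ENNReal.ofReal (σm n ω))
        = (fun x : Ω × ℕ => ∑ n ∈ Finset.Icc 1 x.2, ENNReal.ofReal (σm n x.1))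
          ∘ (fun ω => (ω, R ω)) := rfl
    rw [this]
    exact (measurable_from_prod_countable_left
      (fun k => by
        have := Finset.measurable_sum (Finset.Icc 1 k)
          (f := fun n (x : Ω) => ENNReal.ofReal (σm n x))
          (fun n _ => ENNReal.measurable_ofReal.comp (hσmm n))
        simpa using this)).comp
      (measurable_id.prodMk hRm)
  rw [lintegral_congr_ae hof, lintegral_add_left hsumTe, hG, Jτ]
  -- final arithmetic
  have hq1p : ENNReal.ofReal (1 - p) ≠ 0 := by rw [← hqOf]; exact hq0
  have harith : ENNReal.ofReal ((1 - p) / p) * (Kσ / q) + Kτ / pe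
      = ENNReal.ofReal ((1 - p) / (r * p)) := by
    have hpe' : (ENNReal.ofReal p) ≠ 0 := by rw [← hpeOf]; exact hpe0
    have hqsub : 1 - pe = q := (ENNReal.eq_sub_of_add_eq hpe_top hqpe).symm
    have hK : ENNReal.ofReal ((1 - p) / p) * (Kσ / q) = Kσ / ENNReal.ofReal p := by
      rw [hqOf, ENNReal.ofReal_div_of_pos hp0, div_eq_mul_inv, div_eq_mul_inv, div_eq_mul_inv]
      calc ENNReal.ofReal (1-p) * (ENNReal.ofReal p)⁻¹ * (Kσ * (ENNReal.ofReal (1-p))⁻¹)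
          = Kσ * (ENNReal.ofReal p)⁻¹ * (ENNReal.ofReal (1-p) * (ENNReal.ofReal (1-p))⁻¹) := by
            ring
        _ = Kσ * (ENNReal.ofReal p)⁻¹ := by
            rw [ENNReal.mul_inv_cancel hq1p ENNReal.ofReal_ne_top, mul_one]
    rw [hK, hpeOf, ENNReal.div_add_div_same, hKsum, hqsub, hqOf]
    rw [← ENNReal.ofReal_mul (by positivity : (0:ℝ) ≤ 1/r),
      ← ENNReal.ofReal_div_of_pos hp0]
    congr 1
    field_simp
  rw [harith, ENNReal.toReal_ofReal]
  exact div_nonneg (by linarith) (by positivity)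
end

section
/- Under the setup σ = Y/r with Y > 0, E[Y] = 1, E[e^{δY}] < ∞ for some δ > 0, and τ > 0 independent of σ with P(τ ≤ 0) = 0, for every integer m ≥ 1 the conditioned reset time satisfies E[(σ⁻)^m] / E[σ^m] → 1 as r → ∞, where σ⁻ is σ conditioned on σ < τ. -/
open MeasureTheory ProbabilityTheory Filter Real

private lemma pow_div_factorial_le_exp (m : ℕ) {y : ℝ} (hy : 0 ≤ y) :
    y ^ m / m.factorial ≤ Real.exp y := by
  calc y ^ m / m.factorial
      ≤ ∑ i ∈ Finset.range (m + 1), y ^ i / i.factorial := by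
        refine Finset.single_le_sum (f := fun i => y ^ i / i.factorial)
          (fun i _ => by positivity) (Finset.self_mem_range_succ m)
    _ ≤ Real.exp y := Real.sum_le_exp_of_nonneg hy _

private lemma div_div_div_div_aux (a p b c : ℝ) (hc : c ≠ 0) :
    ((a / c) / p) / (b / c) = a / (p * b) := by
  rcases eq_or_ne b 0 with hb | hb
  · simp [hb]
  rcases eq_or_ne p 0 with hp | hp
  · simp [hp]
  field_simp

/-- `E[(σ⁻)^m] / E[σ^m] → 1` as `r → ∞`, where `σ = Y/r` and `σ⁻` is `σ`
conditioned on `{σ < τ}`, so that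
`E[(σ⁻)^m] = E[σ^m 1_{σ<τ}] / P(σ < τ)`. -/
theorem conditioned_moments_equiv
    {Ω : Type*} [MeasureSpace Ω] [IsProbabilityMeasure (ℙ : Measure Ω)]
    (τ Y : Ω → ℝ) (hτm : Measurable τ) (hYm : Measurable Y)
    (hτpos : ℙ {ω | τ ω ≤ 0} = 0)
    (hYpos : ℙ {ω | Y ω ≤ 0} = 0)
    (hYmean : ∫ ω, Y ω ∂ℙ = 1)
    (δ : ℝ) (hδ : 0 < δ)
    (hYmgf : Integrable (fun ω => Real.exp (δ * Y ω)) ℙ)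
    (hindep : IndepFun τ Y ℙ)
    (hp : ∀ r : ℝ, 0 < r → 0 < (ℙ {ω | Y ω / r < τ ω}).toReal)
    (m : ℕ) (hm : 1 ≤ m) :
    Tendsto (fun r : ℝ =>
        ((∫ ω in {ω | Y ω / r < τ ω}, (Y ω / r) ^ m ∂ℙ) /
            (ℙ {ω | Y ω / r < τ ω}).toReal) /
          (∫ ω, (Y ω / r) ^ m ∂ℙ))
      atTop (nhds 1) := by
  set A : ℝ → Set Ω := fun r => {ω | Y ω / r < τ ω} with hA
  have hAmeas : ∀ r, MeasurableSet (A r) := fun r =>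
    measurableSet_lt (hYm.div_const r) hτm
  -- a.e. positivity of Y and τ
  have hae : ∀ᵐ ω ∂(ℙ : Measure Ω), 0 < Y ω ∧ 0 < τ ω := by
    have h1 : ∀ᵐ ω ∂(ℙ : Measure Ω), 0 < Y ω := by
      rw [ae_iff]; simpa [not_lt] using hYpos
    have h2 : ∀ᵐ ω ∂(ℙ : Measure Ω), 0 < τ ω := by
      rw [ae_iff]; simpa [not_lt] using hτpos
    exact h1.and h2
  have hYnn : ∀ᵐ ω ∂(ℙ : Measure Ω), 0 ≤ Y ω := hae.mono fun ω h => h.1.le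
  -- integrability of Y ^ m
  have hint : Integrable (fun ω => Y ω ^ m) ℙ := by
    refine (hYmgf.const_mul (m.factorial / δ ^ m)).mono'
      ((hYm.pow_const m).aestronglyMeasurable) ?_
    filter_upwards [hYnn] with ω hω
    rw [Real.norm_eq_abs, abs_pow, abs_of_nonneg hω]
    have h1 : (δ * Y ω) ^ m / m.factorial ≤ Real.exp (δ * Y ω) :=
      pow_div_factorial_le_exp m (by positivity)
    rw [mul_pow] at h1
    rw [div_mul_eq_mul_div, le_div_iff₀ (by positivity : (0:ℝ) < δ ^ m)]
    have hf : (0:ℝ) < m.factorial := by exact_mod_cast m.factorial_pos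
    calc Y ω ^ m * δ ^ m = δ ^ m * Y ω ^ m := by ring
      _ ≤ Real.exp (δ * Y ω) * m.factorial := by
          rw [div_le_iff₀ hf] at h1; linarith
      _ = ↑m.factorial * Real.exp (δ * Y ω) := by ring
  -- eventually ω ∈ A r
  have hmem : ∀ᵐ ω ∂(ℙ : Measure Ω), ∀ᶠ r in (atTop : Filter ℝ), ω ∈ A r := by
    filter_upwards [hae] with ω hω
    have ht : Tendsto (fun r : ℝ => Y ω / r) atTop (nhds 0) :=
      tendsto_const_nhds.div_atTop tendsto_id
    exact ht.eventually_lt_const hω.2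
  -- limit of set integrals
  set I : ℝ := ∫ ω, Y ω ^ m ∂ℙ with hI
  have hIpos : 0 < I := by
    rw [hI, integral_pos_iff_support_of_nonneg_ae
      (hYnn.mono fun ω h => by positivity) hint]
    have hsub : {ω | 0 < Y ω} ⊆ Function.support fun ω => Y ω ^ m := by
      intro ω hω
      exact pow_ne_zero m (ne_of_gt hω)
    have h1 : (ℙ : Measure Ω) {ω | 0 < Y ω} = 1 := by
      have : {ω | 0 < Y ω} = {ω | Y ω ≤ 0}ᶜ := by ext ω; simp [not_le]
      have hMs : MeasurableSet {ω | Y ω ≤ 0} := hYm measurableSet_Iic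
      rw [this, measure_compl hMs (measure_ne_top _ _), hYpos]
      simp
    calc (0 : ENNReal) < 1 := by norm_num
      _ = ℙ {ω | 0 < Y ω} := h1.symm
      _ ≤ ℙ (Function.support fun ω => Y ω ^ m) := measure_mono hsub
  have hf : Tendsto (fun r => ∫ ω in A r, Y ω ^ m ∂ℙ) atTop (nhds I) := by
    have := tendsto_integral_filter_of_dominated_convergence
      (μ := (ℙ : Measure Ω)) (l := (atTop : Filter ℝ))
      (F := fun r => (A r).indicator fun ω => Y ω ^ m)
      (f := fun ω => Y ω ^ m) (bound := fun ω => |Y ω ^ m|)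
      (Eventually.of_forall fun r =>
        ((hYm.pow_const m).indicator (hAmeas r)).aestronglyMeasurable)
      (Eventually.of_forall fun r => Eventually.of_forall fun ω => by
        simpa [Real.norm_eq_abs] using
          norm_indicator_le_norm_self (fun ω => Y ω ^ m) ω (s := A r))
      hint.abs
      (by
        filter_upwards [hmem] with ω hω
        refine Tendsto.congr' ?_ tendsto_const_nhds
        filter_upwards [hω] with r hr
        simp [Set.indicator_of_mem hr])
    simpa [integral_indicator (hAmeas _)] using this
  -- limit of probabilities
  have hprob : Tendsto (fun r => (ℙ (A r)).toReal) atTop (nhds 1) := by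
    have := tendsto_integral_filter_of_dominated_convergence
      (μ := (ℙ : Measure Ω)) (l := (atTop : Filter ℝ))
      (F := fun r => (A r).indicator fun _ => (1 : ℝ))
      (f := fun _ => (1 : ℝ)) (bound := fun _ => (1 : ℝ))
      (Eventually.of_forall fun r =>
        ((measurable_const (a := (1:ℝ))).indicator (hAmeas r)).aestronglyMeasurable)
      (Eventually.of_forall fun r => Eventually.of_forall fun ω => by
        classical
        by_cases h : ω ∈ A r <;> simp [Set.indicator, h])
      (integrable_const 1)
      (by
        filter_upwards [hmem] with ω hω
        refine Tendsto.congr' ?_ tendsto_const_nhds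
        filter_upwards [hω] with r hr
        simp [Set.indicator_of_mem hr])
    have heq : ∀ r : ℝ, ∫ ω, (A r).indicator (fun _ => (1:ℝ)) ω ∂ℙ
        = (ℙ (A r)).toReal := by
      intro r
      rw [integral_indicator (hAmeas r)]
      simp
      rfl
    simpa [heq] using this
  -- combine
  have hcomb : Tendsto (fun r => (∫ ω in A r, Y ω ^ m ∂ℙ) /
      ((ℙ (A r)).toReal * I)) atTop (nhds 1) := by
    have h1 : Tendsto (fun r => ((ℙ (A r)).toReal * I)) atTop (nhds (1 * I)) :=
      hprob.mul tendsto_const_nhds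
    have := hf.div h1 (by rw [one_mul]; exact ne_of_gt hIpos)
    rw [one_mul, div_self (ne_of_gt hIpos)] at this
    exact this
  refine hcomb.congr' ?_
  filter_upwards [eventually_gt_atTop (0:ℝ)] with r hr
  have hc : (r : ℝ) ^ m ≠ 0 := pow_ne_zero m (ne_of_gt hr)
  have h1 : ∫ ω in A r, (Y ω / r) ^ m ∂ℙ = (∫ ω in A r, Y ω ^ m ∂ℙ) / r ^ m := by
    simp_rw [div_pow]
    exact integral_div _ _
  have h2 : ∫ ω, (Y ω / r) ^ m ∂ℙ = I / r ^ m := by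
    simp_rw [div_pow]
    exact integral_div _ _
  rw [h1, h2, div_div_div_div_aux _ _ _ _ hc]
end

section
/- Let τ > 0 have distribution function F_τ with lim_{t→0⁺} t^d ln F_τ(t) = −C for some C > 0, d > 0, and let p(r) = ∫₀^∞ e^{−rt} dF_τ(t). Then ln p(r) ∼ −γ r^{d/(d+1)} as r → ∞, where γ = ((d+1)/d^{d/(d+1)}) C^{1/(d+1)}. -/
open MeasureTheory ProbabilityTheory Filter Real

set_option linter.unusedSectionVars false

section auxiliary

lemma my_amgm (C d : ℝ) (hC : 0 < C) (hd : 0 < d) (x : ℝ) (hx : 0 < x) :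
    ((d + 1) / d ^ (d / (d + 1))) * C ^ (1 / (d + 1)) ≤ x + C * x ^ (-d) := by
  have hd1 : (0:ℝ) < d + 1 := by linarith
  set w₁ : ℝ := d / (d + 1) with hw₁
  set w₂ : ℝ := 1 / (d + 1) with hw₂
  have hw₁0 : 0 ≤ w₁ := by positivity
  have hw₂0 : 0 ≤ w₂ := by positivity
  have hw : w₁ + w₂ = 1 := by rw [hw₁, hw₂]; field_simp
  set p₁ : ℝ := x * (d + 1) / d with hp₁
  set p₂ : ℝ := C * x ^ (-d) * (d + 1) with hp₂
  have hp₁0 : 0 ≤ p₁ := by positivity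
  have hp₂0 : 0 ≤ p₂ := by positivity
  have key := Real.geom_mean_le_arith_mean2_weighted hw₁0 hw₂0 hp₁0 hp₂0 hw
  have hrhs : w₁ * p₁ + w₂ * p₂ = x + C * x ^ (-d) := by
    have h1 : d ≠ 0 := hd.ne'
    have h2 : d + 1 ≠ 0 := hd1.ne'
    rw [hw₁, hw₂, hp₁, hp₂, div_mul_div_comm, one_div_mul_eq_div, mul_div_cancel_right₀ _ h2]
    rw [show d * (x * (d + 1)) = x * ((d + 1) * d) by ring, mul_div_cancel_right₀ _ (mul_ne_zero h2 h1)]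
  have hlhs : p₁ ^ w₁ * p₂ ^ w₂ = ((d + 1) / d ^ w₁) * C ^ w₂ := by
    have h1 : p₁ ^ w₁ = x ^ w₁ * (d+1) ^ w₁ / d ^ w₁ := by
      rw [hp₁, Real.div_rpow (by positivity) hd.le, Real.mul_rpow hx.le hd1.le]
    have h2 : p₂ ^ w₂ = C ^ w₂ * x ^ (-(d * w₂)) * (d+1) ^ w₂ := by
      rw [hp₂, Real.mul_rpow (by positivity) hd1.le,
        Real.mul_rpow hC.le (by positivity), ← Real.rpow_mul hx.le, neg_mul]
    have hx1 : x ^ w₁ * x ^ (-(d * w₂)) = 1 := by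
      rw [← Real.rpow_add hx]
      have : w₁ + -(d * w₂) = 0 := by rw [hw₁, hw₂]; field_simp; ring
      rw [this, Real.rpow_zero]
    have hdd : (d+1) ^ w₁ * (d+1) ^ w₂ = d + 1 := by
      rw [← Real.rpow_add hd1, hw, Real.rpow_one]
    calc p₁ ^ w₁ * p₂ ^ w₂
        = (x ^ w₁ * x ^ (-(d * w₂))) * ((d+1) ^ w₁ * (d+1) ^ w₂) * C ^ w₂ / d ^ w₁ := by
          rw [h1, h2]; ring
      _ = ((d + 1) / d ^ w₁) * C ^ w₂ := by rw [hx1, hdd]; ring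
  rw [← hrhs, ← hlhs]; exact key


lemma my_gamma_eq (C d : ℝ) (hC : 0 < C) (hd : 0 < d) :
    ((d + 1) / d ^ (d / (d + 1))) * C ^ (1 / (d + 1))
      = (d * C) ^ (1 / (d + 1)) + C * (d * C) ^ (-(d / (d + 1))) := by
  have hd1 : (0:ℝ) < d + 1 := by linarith
  have hdC : (0:ℝ) < d * C := by positivity
  have h1 : (d * C) ^ (1 / (d + 1)) = (d * C) * (d * C) ^ (-(d / (d + 1))) := by
    rw [show (1 / (d+1) : ℝ) = 1 + -(d/(d+1)) by field_simp; ring,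
      Real.rpow_add hdC, Real.rpow_one]
  have h2 : C * (C ^ (-(d / (d + 1)))) = C ^ (1/(d+1)) := by
    nth_rewrite 1 [← Real.rpow_one C]
    rw [← Real.rpow_add hC]
    congr 1
    field_simp; ring
  have h3 : d ^ (-(d / (d + 1))) = (d ^ (d / (d + 1)))⁻¹ := by
    rw [Real.rpow_neg hd.le]
  rw [h1, ← add_mul, Real.mul_rpow hd.le hC.le, h3]
  calc ((d + 1) / d ^ (d / (d + 1))) * C ^ (1 / (d + 1))
      = ((d + 1) * (C * C ^ (-(d / (d + 1))))) * (d ^ (d / (d + 1)))⁻¹ := by rw [h2]; ring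
    _ = (d * C + C) * ((d ^ (d / (d + 1)))⁻¹ * C ^ (-(d / (d + 1)))) := by ring


lemma my_hF_bound (f : ℝ → ℝ) (c : ℝ)
    (h : Tendsto f (nhdsWithin 0 (Set.Ioi 0)) (nhds c)) (ε : ℝ) (hε : 0 < ε) :
    ∃ δ > 0, ∀ t, 0 < t → t < δ → |f t - c| < ε := by
  have h1 := Metric.tendsto_nhds.1 h ε hε
  rw [eventually_nhdsWithin_iff, Metric.eventually_nhds_iff] at h1
  obtain ⟨δ, hδ, h'⟩ := h1
  refine ⟨δ, hδ, fun t ht htδ => ?_⟩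
  have := h' (y := t) (by rw [Real.dist_eq, sub_zero]; exact abs_lt.2 ⟨by linarith, htδ⟩) ht
  rwa [Real.dist_eq] at this


variable {Ω : Type*} [MeasureSpace Ω] [IsProbabilityMeasure (ℙ : Measure Ω)]
  (τ : Ω → ℝ)

lemma my_ae_pos (hτpos : ℙ {ω | τ ω ≤ 0} = 0) : ∀ᵐ ω ∂(ℙ : Measure Ω), 0 < τ ω := by
  rw [ae_iff]
  convert hτpos using 2
  ext ω; simp [not_lt]

lemma my_integrable (hτm : Measurable τ) (hτpos : ℙ {ω | τ ω ≤ 0} = 0)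
    (r : ℝ) (hr : 0 ≤ r) : Integrable (fun ω => Real.exp (-r * τ ω)) ℙ := by
  refine (integrable_const (1:ℝ)).mono'
    ((measurable_exp.comp (hτm.const_mul (-r))).aestronglyMeasurable) ?_
  filter_upwards [my_ae_pos τ hτpos] with ω hω
  rw [Real.norm_eq_abs, abs_of_pos (Real.exp_pos _)]
  calc Real.exp (-r * τ ω) ≤ Real.exp 0 := Real.exp_le_exp.2 (by nlinarith)
    _ = 1 := Real.exp_zero

lemma my_lower (hτm : Measurable τ) (hτpos : ℙ {ω | τ ω ≤ 0} = 0)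
    (r t : ℝ) (hr : 0 ≤ r) :
    Real.exp (-r * t) * (ℙ {ω | τ ω ≤ t}).toReal ≤ ∫ ω, Real.exp (-r * τ ω) ∂ℙ := by
  have hset : MeasurableSet {ω | τ ω ≤ t} := hτm measurableSet_Iic
  have hint := my_integrable τ hτm hτpos r hr
  calc Real.exp (-r * t) * (ℙ {ω | τ ω ≤ t}).toReal
      = ∫ _ω in {ω | τ ω ≤ t}, Real.exp (-r * t) ∂ℙ := by
        rw [setIntegral_const, smul_eq_mul, mul_comm, Measure.real]
    _ ≤ ∫ ω in {ω | τ ω ≤ t}, Real.exp (-r * τ ω) ∂ℙ := by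
        refine setIntegral_mono_on (integrableOn_const (measure_lt_top _ _).ne)
          hint.integrableOn hset ?_
        intro ω hω
        exact Real.exp_le_exp.2 (by simp only [Set.mem_setOf_eq] at hω; nlinarith)
    _ ≤ ∫ ω, Real.exp (-r * τ ω) ∂ℙ :=
        setIntegral_le_integral hint (Filter.Eventually.of_forall fun ω => (Real.exp_pos _).le)

lemma my_upper (hτm : Measurable τ) (hτpos : ℙ {ω | τ ω ≤ 0} = 0)
    (r θ : ℝ) (hr : 0 ≤ r) (hθ : 0 < θ) (K : ℕ) :
    ∫ ω, Real.exp (-r * τ ω) ∂ℙ ≤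
      (∑ j ∈ Finset.range K,
        Real.exp (-r * (j * θ)) * (ℙ {ω | τ ω ≤ ((j:ℝ)+1) * θ}).toReal)
        + Real.exp (-r * (K * θ)) := by
  set g : Ω → ℝ := fun ω => (∑ j ∈ Finset.range K,
      Set.indicator {ω | τ ω ≤ ((j:ℝ)+1) * θ} (fun _ => Real.exp (-r * (j * θ))) ω)
      + Real.exp (-r * (K * θ)) with hg
  have hset : ∀ t : ℝ, MeasurableSet {ω | τ ω ≤ t} := fun t => hτm measurableSet_Iic
  have hgint : Integrable g ℙ := by
    refine Integrable.add (integrable_finset_sum _ fun j _ => ?_) (integrable_const _)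
    exact (integrable_const _).indicator (hset _)
  have hpt : ∀ᵐ ω ∂(ℙ : Measure Ω), Real.exp (-r * τ ω) ≤ g ω := by
    filter_upwards [my_ae_pos τ hτpos] with ω hω
    by_cases hcase : τ ω ≤ K * θ
    · -- find the interval
      set i : ℕ := ⌈τ ω / θ⌉₊ with hi
      have hτθ : 0 < τ ω / θ := div_pos hω hθ
      have hi1 : 1 ≤ i := Nat.one_le_iff_ne_zero.2 (by
        simp [hi, Nat.ceil_eq_zero, not_le, hτθ])
      have hiK : i ≤ K := Nat.ceil_le.2 (by
        rw [div_le_iff₀ hθ]; exact hcase)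
      set j : ℕ := i - 1 with hj
      have hjK : j ∈ Finset.range K := Finset.mem_range.2 (by omega)
      have hji : (j : ℝ) + 1 = (i : ℝ) := by
        rw [hj, Nat.cast_sub hi1]; ring
      have hmem : ω ∈ {ω | τ ω ≤ ((j:ℝ)+1) * θ} := by
        simp only [Set.mem_setOf_eq, hji]
        calc τ ω = (τ ω / θ) * θ := by field_simp
          _ ≤ (i : ℝ) * θ := by
            exact mul_le_mul_of_nonneg_right (Nat.le_ceil _) hθ.le
      have hjτ : (j : ℝ) * θ ≤ τ ω := by
        have h1 : (i : ℝ) < τ ω / θ + 1 := Nat.ceil_lt_add_one hτθ.le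
        have h2 : (j : ℝ) < τ ω / θ := by rw [← sub_lt_iff_lt_add] at h1; linarith [hji]
        calc (j:ℝ) * θ ≤ (τ ω / θ) * θ := mul_le_mul_of_nonneg_right h2.le hθ.le
          _ = τ ω := by field_simp
      have hterm : Real.exp (-r * τ ω) ≤
          Set.indicator {ω | τ ω ≤ ((j:ℝ)+1) * θ} (fun _ => Real.exp (-r * (j * θ))) ω := by
        rw [Set.indicator_of_mem hmem]
        exact Real.exp_le_exp.2 (by nlinarith)
      calc Real.exp (-r * τ ω)
          ≤ Set.indicator {ω | τ ω ≤ ((j:ℝ)+1) * θ} (fun _ => Real.exp (-r * (j * θ))) ω :=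
            hterm
        _ ≤ ∑ j ∈ Finset.range K,
            Set.indicator {ω | τ ω ≤ ((j:ℝ)+1) * θ} (fun _ => Real.exp (-r * (j * θ))) ω := by
            refine Finset.single_le_sum (f := fun k : ℕ => Set.indicator
                {ω | τ ω ≤ ((k:ℝ)+1) * θ} (fun _ => Real.exp (-r * (k * θ))) ω)
              (s := Finset.range K)
              (fun k _ => Set.indicator_nonneg (fun _ _ => (Real.exp_pos _).le) _) hjK
        _ ≤ g ω := by rw [hg]; simp only; linarith [(Real.exp_pos (-r * (K * θ))).le]
    · push_neg at hcase
      have : Real.exp (-r * τ ω) ≤ Real.exp (-r * (K * θ)) :=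
        Real.exp_le_exp.2 (by nlinarith)
      rw [hg]
      have hsum : (0:ℝ) ≤ ∑ j ∈ Finset.range K,
          Set.indicator {ω | τ ω ≤ ((j:ℝ)+1) * θ} (fun _ => Real.exp (-r * (j * θ))) ω :=
        Finset.sum_nonneg fun k _ => Set.indicator_nonneg (fun _ _ => (Real.exp_pos _).le) _
      simp only; linarith
  calc ∫ ω, Real.exp (-r * τ ω) ∂ℙ ≤ ∫ ω, g ω ∂ℙ :=
        integral_mono_ae (my_integrable τ hτm hτpos r hr) hgint hpt
    _ = (∑ j ∈ Finset.range K,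
        Real.exp (-r * (j * θ)) * (ℙ {ω | τ ω ≤ ((j:ℝ)+1) * θ}).toReal)
        + Real.exp (-r * (K * θ)) := by
        rw [hg, integral_add (integrable_finset_sum _ fun j _ =>
          (integrable_const _).indicator (hset _)) (integrable_const _),
          integral_finset_sum _ fun j _ => (integrable_const _).indicator (hset _),
          integral_const]
        simp only [probReal_univ, one_smul]
        congr 1
        refine Finset.sum_congr rfl fun j _ => ?_
        rw [integral_indicator_const _ (hset _), smul_eq_mul, mul_comm, Measure.real]

end auxiliary


set_option maxHeartbeats 1000000 in
theorem log_success_prob_asymptotics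
    {Ω : Type*} [MeasureSpace Ω] [IsProbabilityMeasure (ℙ : Measure Ω)]
    (τ : Ω → ℝ) (hτm : Measurable τ) (hτpos : ℙ {ω | τ ω ≤ 0} = 0)
    (C d : ℝ) (hC : 0 < C) (hd : 0 < d)
    (hF : Tendsto (fun t : ℝ => t ^ d * Real.log (ℙ {ω | τ ω ≤ t}).toReal)
      (nhdsWithin 0 (Set.Ioi 0)) (nhds (-C)))
    (γ : ℝ) (hγ : γ = ((d + 1) / d ^ (d / (d + 1))) * C ^ (1 / (d + 1))) :
    Tendsto (fun r : ℝ =>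
        Real.log (∫ ω, Real.exp (-r * τ ω) ∂ℙ) / (-γ * r ^ (d / (d + 1))))
      atTop (nhds 1) := by
  have hd1 : (0:ℝ) < d + 1 := by linarith
  set α : ℝ := d / (d + 1) with hα'
  set β : ℝ := 1 / (d + 1) with hβ'
  have hα : 0 < α := by positivity
  have hβ : 0 < β := by positivity
  have hβα : β * d = α := by rw [hα', hβ']; field_simp
  have h1β : 1 + -β = α := by rw [hα', hβ']; field_simp; ring
  have hγpos : 0 < γ := by
    rw [hγ]; positivity
  have hdC : (0:ℝ) < d * C := by positivity
  set F : ℝ → ℝ := fun t => (ℙ {ω | τ ω ≤ t}).toReal with hFdef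
  set p : ℝ → ℝ := fun r => ∫ ω, Real.exp (-r * τ ω) ∂ℙ with hpdef
  rw [Metric.tendsto_nhds]
  intro ε hε
  set ε' : ℝ := min (ε/2) (1/2) with hε'def
  have hε'pos : 0 < ε' := lt_min (by linarith) (by norm_num)
  have hε'le : ε' ≤ ε/2 := min_le_left _ _
  have hε'1 : ε' ≤ 1/2 := min_le_right _ _
  -- ### Lower bound
  set ε₁ : ℝ := min (ε' * γ * (d*C)^α) (C/2) with hε₁def
  have hε₁pos : 0 < ε₁ := lt_min (by positivity) (by linarith)
  have hε₁C : ε₁ ≤ C/2 := min_le_right _ _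
  obtain ⟨δ₁, hδ₁, h₁⟩ := my_hF_bound _ _ hF ε₁ hε₁pos
  have hLowEv : ∀ᶠ r : ℝ in atTop, (d*C)^β * r^(-β) < δ₁ := by
    have h := (tendsto_rpow_neg_atTop hβ).const_mul ((d*C)^β)
    rw [mul_zero] at h
    exact h.eventually_lt_const hδ₁
  have hLow : ∀ᶠ r : ℝ in atTop,
      0 < p r ∧ -((1+ε')*γ*r^α) ≤ Real.log (p r) := by
    filter_upwards [eventually_ge_atTop (1:ℝ), hLowEv] with r hr1 hrδ
    have hrpos : (0:ℝ) < r := by linarith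
    set t : ℝ := (d*C)^β * r^(-β) with htdef
    have htpos : 0 < t := by positivity
    have htd : (0:ℝ) < t ^ d := Real.rpow_pos_of_pos htpos d
    have hb := h₁ t htpos hrδ
    rw [sub_neg_eq_add, abs_lt] at hb
    have hFpos : 0 < F t := by
      rcases lt_or_eq_of_le (ENNReal.toReal_nonneg :
          (0:ℝ) ≤ (ℙ {ω | τ ω ≤ t}).toReal) with h | h
      · exact h
      · exfalso
        have : Real.log (F t) = 0 := by rw [hFdef]; simp [← h]
        rw [this, mul_zero] at hb
        linarith [hb.2]
    -- log F t ≥ -(C+ε₁) * t^(-d)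
    have hlogF : -((C+ε₁) * t^(-d)) ≤ Real.log (F t) := by
      have h2 : -(C+ε₁) ≤ t^d * Real.log (F t) := by linarith [hb.1]
      have h3 := mul_le_mul_of_nonneg_right h2 (inv_nonneg.2 htd.le)
      rw [mul_comm (t^d) (Real.log (F t)), mul_assoc, mul_inv_cancel₀ htd.ne',
        mul_one] at h3
      rw [Real.rpow_neg htpos.le]
      calc -((C+ε₁) * (t^d)⁻¹) = -(C+ε₁) * (t^d)⁻¹ := by ring
        _ ≤ Real.log (F t) := h3
    have hple : Real.exp (-r * t) * F t ≤ p r := my_lower τ hτm hτpos r t (by linarith)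
    have hppos : 0 < p r := lt_of_lt_of_le (by positivity) hple
    refine ⟨hppos, ?_⟩
    have hlogp : Real.log (Real.exp (-r * t) * F t) ≤ Real.log (p r) :=
      Real.log_le_log (by positivity) hple
    rw [Real.log_mul (Real.exp_pos _).ne' hFpos.ne', Real.log_exp] at hlogp
    -- computations
    have hrt : r * t = (d*C)^β * r^α := by
      rw [htdef]
      nth_rewrite 1 [← Real.rpow_one r]
      rw [mul_comm ((d*C)^β) (r^(-β)), ← mul_assoc, ← Real.rpow_add hrpos, h1β, mul_comm]
    have htnd : t ^ (-d) = (d*C)^(-α) * r^α := by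
      rw [htdef, Real.mul_rpow (by positivity) (by positivity),
        ← Real.rpow_mul hdC.le, ← Real.rpow_mul hrpos.le]
      congr 1
      · congr 1; rw [← hβα]; ring
      · rw [← hβα]; ring
    have hkey : -((1+ε')*γ*r^α) ≤ -(r * t) + -((C+ε₁) * t^(-d)) := by
      rw [hrt, htnd]
      have hγeq := my_gamma_eq C d hC hd
      rw [← hγ] at hγeq
      have hone : (d*C)^α * (d*C)^(-α) = 1 := by
        rw [← Real.rpow_add hdC]; simp
      have hε₁le : ε₁ * (d*C)^(-α) ≤ ε' * γ := by
        calc ε₁ * (d*C)^(-α) ≤ (ε' * γ * (d*C)^α) * (d*C)^(-α) :=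
              mul_le_mul_of_nonneg_right (min_le_left _ _)
                (Real.rpow_nonneg hdC.le _)
          _ = ε' * γ * ((d*C)^α * (d*C)^(-α)) := by ring
          _ = ε' * γ := by rw [hone, mul_one]
      have hrα : (0:ℝ) < r^α := Real.rpow_pos_of_pos hrpos α
      have h5 : (d*C)^β + (C+ε₁) * (d*C)^(-α) ≤ (1+ε')*γ := by linarith
      have h6 := mul_le_mul_of_nonneg_right h5 hrα.le
      calc -((1+ε')*γ*r^α) ≤ -(((d*C)^β + (C+ε₁) * (d*C)^(-α)) * r^α) := by linarith
        _ = -((d*C)^β * r^α) + -((C+ε₁) * ((d*C)^(-α) * r^α)) := by ring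
    calc -((1+ε')*γ*r^α) ≤ -(r * t) + -((C+ε₁) * t^(-d)) := hkey
      _ ≤ -r * t + Real.log (F t) := by
          rw [neg_mul]; linarith [hlogF]
      _ ≤ Real.log (p r) := hlogp
  -- ### Upper bound
  set δ : ℝ := ε' * γ / 4 with hδdef
  have hδpos : 0 < δ := by positivity
  set ε₂ : ℝ := min (C/2) (ε' * γ / 4 * δ^d) with hε₂def
  have hε₂pos : 0 < ε₂ := lt_min (by linarith) (by positivity)
  have hε₂C : ε₂ ≤ C/2 := min_le_left _ _
  have hδd : (0:ℝ) < δ^d := Real.rpow_pos_of_pos hδpos d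
  set γ' : ℝ := γ - δ - ε₂ * δ^(-d) with hγ'def
  have hδdd : δ^d * δ^(-d) = 1 := by rw [← Real.rpow_add hδpos]; simp
  have hγ'ge : (1 - ε'/2) * γ ≤ γ' := by
    have h2 : ε₂ * δ^(-d) ≤ ε' * γ / 4 := by
      calc ε₂ * δ^(-d) ≤ (ε' * γ / 4 * δ^d) * δ^(-d) :=
            mul_le_mul_of_nonneg_right (min_le_right _ _)
              (Real.rpow_nonneg hδpos.le _)
        _ = ε' * γ / 4 * (δ^d * δ^(-d)) := by ring
        _ = ε' * γ / 4 := by rw [hδdd, mul_one]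
    rw [hγ'def]; linarith [h2, hδdef.le, hδdef.ge]
  have hγ'γ : γ' ≤ γ := by
    rw [hγ'def]
    have : 0 ≤ ε₂ * δ^(-d) := by positivity
    linarith
  have hγ'pos : 0 < γ' := by
    have h34 : (3/4:ℝ) ≤ 1 - ε'/2 := by linarith
    have h35 : (3/4:ℝ)*γ ≤ (1-ε'/2)*γ := mul_le_mul_of_nonneg_right h34 hγpos.le
    linarith
  set K : ℕ := ⌈γ/δ⌉₊ + 1 with hKdef
  have hKδ : γ ≤ K * δ := by
    calc γ = (γ/δ) * δ := by field_simp
      _ ≤ (K:ℝ) * δ := by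
          refine mul_le_mul_of_nonneg_right ?_ hδpos.le
          calc (γ/δ) ≤ (⌈γ/δ⌉₊ : ℝ) := Nat.le_ceil _
            _ ≤ (K:ℝ) := by rw [hKdef]; push_cast; linarith
  obtain ⟨δ₂, hδ₂, h₂⟩ := my_hF_bound _ _ hF ε₂ hε₂pos
  have hUpEv1 : ∀ᶠ r : ℝ in atTop, (K*δ) * r^(-β) < δ₂ := by
    have h := (tendsto_rpow_neg_atTop hβ).const_mul ((K:ℝ)*δ)
    rw [mul_zero] at h
    exact h.eventually_lt_const hδ₂
  have hUpEv2 : ∀ᶠ r : ℝ in atTop,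
      2 * Real.log ((K:ℝ)+1) / (ε'*γ) ≤ r^α :=
    (tendsto_rpow_atTop hα).eventually_ge_atTop _
  have hUp : ∀ᶠ r : ℝ in atTop,
      (0 < p r → Real.log (p r) ≤ -((1-ε')*γ*r^α)) := by
    filter_upwards [eventually_ge_atTop (1:ℝ), hUpEv1, hUpEv2] with r hr1 hrδ hrlog hppos
    have hrpos : (0:ℝ) < r := by linarith
    have hrα : (0:ℝ) < r^α := Real.rpow_pos_of_pos hrpos α
    set θ : ℝ := δ * r^(-β) with hθdef
    have hθpos : 0 < θ := by positivity
    -- bound each term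
    have hterm : ∀ j : ℕ, j < K →
        Real.exp (-r * (j * θ)) * F (((j:ℝ)+1) * θ) ≤ Real.exp (-(γ' * r^α)) := by
      intro j hjK
      set t : ℝ := ((j:ℝ)+1) * θ with htdef2
      have hj1 : (0:ℝ) < (j:ℝ)+1 := by positivity
      have htpos : 0 < t := by positivity
      have htδ₂ : t < δ₂ := by
        calc t ≤ (K:ℝ) * θ := by
              rw [htdef2]
              refine mul_le_mul_of_nonneg_right ?_ hθpos.le
              exact_mod_cast Nat.succ_le_of_lt hjK
          _ = (K*δ) * r^(-β) := by rw [hθdef]; ring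
          _ < δ₂ := hrδ
      have htd : (0:ℝ) < t ^ d := Real.rpow_pos_of_pos htpos d
      have hb := h₂ t htpos htδ₂
      rw [sub_neg_eq_add, abs_lt] at hb
      -- F t ≤ exp (-(C-ε₂) * t^(-d))
      have hFle : F t ≤ Real.exp (-((C-ε₂) * t^(-d))) := by
        rcases lt_or_eq_of_le (ENNReal.toReal_nonneg :
            (0:ℝ) ≤ (ℙ {ω | τ ω ≤ t}).toReal) with h | h
        · have hlog : Real.log (F t) ≤ -((C-ε₂) * t^(-d)) := by
            have h2 : t^d * Real.log (F t) ≤ -(C-ε₂) := by linarith only [hb.2]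
            have h3 := mul_le_mul_of_nonneg_right h2 (inv_nonneg.2 htd.le)
            rw [mul_comm (t^d) (Real.log (F t)), mul_assoc,
              mul_inv_cancel₀ htd.ne', mul_one] at h3
            rw [Real.rpow_neg htpos.le]
            calc Real.log (F t) ≤ -(C-ε₂) * (t^d)⁻¹ := h3
              _ = -((C-ε₂) * (t^d)⁻¹) := by ring
          calc F t = Real.exp (Real.log (F t)) := (Real.exp_log h).symm
            _ ≤ Real.exp (-((C-ε₂) * t^(-d))) := Real.exp_le_exp.2 hlog
        · rw [hFdef]; simp only [← h]; positivity
      -- computations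
      have hrjθ : r * ((j:ℝ) * θ) = (j:ℝ) * δ * r^α := by
        rw [hθdef]
        nth_rewrite 1 [← Real.rpow_one r]
        rw [show r^(1:ℝ) * ((j:ℝ) * (δ * r^(-β))) = (j:ℝ) * δ * (r^(1:ℝ) * r^(-β)) by ring,
          ← Real.rpow_add hrpos, h1β]
      have htnd : t ^ (-d) = (((j:ℝ)+1) * δ)^(-d) * r^α := by
        rw [htdef2, hθdef, show ((j:ℝ)+1) * (δ * r^(-β)) = (((j:ℝ)+1) * δ) * r^(-β) by ring,
          Real.mul_rpow (by positivity) (by positivity), ← Real.rpow_mul hrpos.le]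
        congr 1
        rw [← hβα]; ring
      -- bracket bound
      have hbr : γ' ≤ (j:ℝ) * δ + (C-ε₂) * (((j:ℝ)+1) * δ)^(-d) := by
        set x : ℝ := ((j:ℝ)+1) * δ with hxdef
        have hxpos : 0 < x := by positivity
        have hamgm := my_amgm C d hC hd x hxpos
        rw [← hγ] at hamgm
        have hxδ : x^(-d) ≤ δ^(-d) := by
          rw [Real.rpow_neg hxpos.le, Real.rpow_neg hδpos.le]
          refine inv_anti₀ hδd ?_
          refine Real.rpow_le_rpow hδpos.le ?_ hd.le
          rw [hxdef]
          nth_rewrite 1 [← one_mul δ]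
          exact mul_le_mul_of_nonneg_right
            ((le_add_iff_nonneg_left 1).2 (Nat.cast_nonneg j)) hδpos.le
        have hxnn : (0:ℝ) ≤ x^(-d) := (Real.rpow_pos_of_pos hxpos _).le
        have hjx : (j:ℝ) * δ = x - δ := by rw [hxdef]; ring
        have h7 : ε₂ * x^(-d) ≤ ε₂ * δ^(-d) := mul_le_mul_of_nonneg_left hxδ hε₂pos.le
        rw [hjx, hγ'def]
        linarith only [hamgm, h7]
      calc Real.exp (-r * ((j:ℝ) * θ)) * F t
          ≤ Real.exp (-r * ((j:ℝ) * θ)) * Real.exp (-((C-ε₂) * t^(-d))) :=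
            mul_le_mul_of_nonneg_left hFle (Real.exp_pos _).le
        _ = Real.exp (-(r * ((j:ℝ) * θ) + (C-ε₂) * t^(-d))) := by
            rw [← Real.exp_add]; ring_nf
        _ ≤ Real.exp (-(γ' * r^α)) := by
            refine Real.exp_le_exp.2 (neg_le_neg ?_)
            rw [hrjθ, htnd]
            calc γ' * r^α ≤ ((j:ℝ) * δ + (C-ε₂) * (((j:ℝ)+1) * δ)^(-d)) * r^α :=
                  mul_le_mul_of_nonneg_right hbr hrα.le
              _ = (j:ℝ) * δ * r^α + (C-ε₂) * ((((j:ℝ)+1) * δ)^(-d) * r^α) := by ring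
    -- sum
    have hsum := my_upper τ hτm hτpos r θ (by linarith) hθpos K
    have hsum2 : p r ≤ ((K:ℝ)+1) * Real.exp (-(γ' * r^α)) := by
      calc p r ≤ (∑ j ∈ Finset.range K,
            Real.exp (-r * (j * θ)) * (ℙ {ω | τ ω ≤ ((j:ℝ)+1) * θ}).toReal)
            + Real.exp (-r * (K * θ)) := hsum
        _ ≤ (∑ _j ∈ Finset.range K, Real.exp (-(γ' * r^α)))
            + Real.exp (-(γ' * r^α)) := by
            have hrKθ : r * ((K:ℝ) * θ) = (K:ℝ) * δ * r^α := by
              rw [hθdef]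
              nth_rewrite 1 [← Real.rpow_one r]
              rw [show r^(1:ℝ) * ((K:ℝ) * (δ * r^(-β)))
                = (K:ℝ)*δ*(r^(1:ℝ)*r^(-β)) by ring, ← Real.rpow_add hrpos, h1β]
            gcongr with j hj
            · exact hterm j (Finset.mem_range.1 hj)
            · rw [neg_mul, neg_le_neg_iff, hrKθ]
              exact mul_le_mul_of_nonneg_right (le_trans hγ'γ hKδ) hrα.le
        _ = ((K:ℝ)+1) * Real.exp (-(γ' * r^α)) := by
            rw [Finset.sum_const, Finset.card_range, nsmul_eq_mul]; ring
    have hlog2 : Real.log (p r) ≤ Real.log ((K:ℝ)+1) + -(γ' * r^α) := by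
      calc Real.log (p r) ≤ Real.log (((K:ℝ)+1) * Real.exp (-(γ' * r^α))) :=
            Real.log_le_log hppos hsum2
        _ = Real.log ((K:ℝ)+1) + -(γ' * r^α) := by
            rw [Real.log_mul (by positivity) (Real.exp_pos _).ne', Real.log_exp]
    have hlogK : Real.log ((K:ℝ)+1) ≤ ε' * γ / 2 * r^α := by
      have h3 : 2 * Real.log ((K:ℝ)+1) / (ε'*γ) * (ε'*γ/2) ≤ r^α * (ε'*γ/2) :=
        mul_le_mul_of_nonneg_right hrlog (by positivity)
      have h4 : 2 * Real.log ((K:ℝ)+1) / (ε'*γ) * (ε'*γ/2) = Real.log ((K:ℝ)+1) := by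
        field_simp
      rw [h4] at h3; linarith
    calc Real.log (p r) ≤ Real.log ((K:ℝ)+1) + -(γ' * r^α) := hlog2
      _ ≤ ε' * γ / 2 * r^α + -((1 - ε'/2) * γ * r^α) := by
          have := mul_le_mul_of_nonneg_right hγ'ge hrα.le
          linarith
      _ = -((1-ε')*γ*r^α) := by ring
  -- ### combine
  filter_upwards [hLow, hUp, eventually_ge_atTop (1:ℝ)] with r hlow hup hr1
  obtain ⟨hppos, hlb⟩ := hlow
  have hub := hup hppos
  have hrpos : (0:ℝ) < r := by linarith
  have hrα : (0:ℝ) < r^α := Real.rpow_pos_of_pos hrpos α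
  have hden : (0:ℝ) < γ * r^α := by positivity
  have heq : Real.log (p r) / (-γ * r^α) = -Real.log (p r) / (γ * r^α) := by
    rw [neg_mul, div_neg, neg_div]
  rw [Real.dist_eq, heq]
  have hf1 : -Real.log (p r) / (γ * r^α) ≤ 1 + ε' := by
    rw [div_le_iff₀ hden]
    have : -((1+ε')*γ*r^α) ≤ Real.log (p r) := hlb
    nlinarith [this]
  have hf2 : 1 - ε' ≤ -Real.log (p r) / (γ * r^α) := by
    rw [le_div_iff₀ hden]
    have : Real.log (p r) ≤ -((1-ε')*γ*r^α) := hub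
    nlinarith [this]
  have : |(-Real.log (p r) / (γ * r^α)) - 1| ≤ ε' := abs_le.2 ⟨by linarith, by linarith⟩
  linarith [lt_of_le_of_lt hε'le (by linarith : ε/2 < ε)]
end

section
/- The Laplace transform of t ↦ erfc(√(c/t)) for c > 0 is ∫₀^∞ e^{−st} erfc(√(c/t)) dt = e^{−2√(cs)}/s for all s > 0, where erfc(z) = (2/√π) ∫_z^∞ e^{−u²} du. -/
open MeasureTheory Real

/-- The complementary error function. -/
noncomputable def erfc (z : ℝ) : ℝ :=
  (2 / Real.sqrt π) * ∫ u in Set.Ioi z, Real.exp (-u ^ 2)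

section Aux
open Set

lemma glasser_half {b : ℝ} (hb : 0 < b) :
    ∫ x in Ioi (0:ℝ), Real.exp (-(x - b / x) ^ 2) = Real.sqrt π / 2 := by
  set g : ℝ → ℝ := fun v => Real.exp (-v ^ 2) with hg
  -- derivative of f x = x - b/x
  have hf' : ∀ x ∈ Ioi (0:ℝ), HasDerivWithinAt (fun x => x - b / x)
      (1 + b / x ^ 2) (Ioi 0) x := by
    intro x hx
    have hx0 : x ≠ 0 := (mem_Ioi.mp hx).ne'
    have h1 : HasDerivAt (fun x : ℝ => x - b * x⁻¹) (1 - b * (-(x ^ 2)⁻¹)) x :=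
      (hasDerivAt_id x).sub ((hasDerivAt_inv hx0).const_mul b)
    have hfeq : (fun x : ℝ => x - b / x) = fun x : ℝ => x - b * x⁻¹ :=
      funext fun y => by rw [div_eq_mul_inv]
    have hveq : (1 : ℝ) + b / x ^ 2 = 1 - b * (-(x ^ 2)⁻¹) := by ring
    rw [hfeq, hveq]
    exact h1.hasDerivWithinAt
  have hinj : InjOn (fun x => x - b / x) (Ioi (0:ℝ)) := by
    apply StrictMonoOn.injOn
    intro x hx y hy hxy
    exact sub_lt_sub hxy (div_lt_div_of_pos_left hb (mem_Ioi.mp hx) hxy)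
  have himg : (fun x => x - b / x) '' Ioi (0:ℝ) = univ := by
    apply eq_univ_of_forall
    intro v
    have h4b : (0:ℝ) < v ^ 2 + 4 * b := by positivity
    set r := Real.sqrt (v ^ 2 + 4 * b) with hr
    have hr2 : r ^ 2 = v ^ 2 + 4 * b := Real.sq_sqrt h4b.le
    have hrv : -v < r := by
      have h1 : |v| < r := by
        rw [← Real.sqrt_sq_eq_abs]
        exact Real.sqrt_lt_sqrt (sq_nonneg v) (by linarith)
      calc -v ≤ |v| := neg_le_abs v
        _ < r := h1
    have hxpos : 0 < (v + r) / 2 := by linarith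
    refine ⟨(v + r) / 2, hxpos, ?_⟩
    have hvr : v + r ≠ 0 := by linarith
    show (v + r) / 2 - b / ((v + r) / 2) = v
    field_simp
    nlinarith [hr2]
  -- the key combined integral
  have hK := integral_image_eq_integral_abs_deriv_smul measurableSet_Ioi hf' hinj g
  rw [himg, Measure.restrict_univ] at hK
  have hgauss : ∫ x : ℝ, g x = Real.sqrt π := by
    have := integral_gaussian 1
    simpa [hg] using this
  rw [hgauss] at hK
  -- integrability of the combined integrand
  have hKint : IntegrableOn (fun x => |1 + b / x ^ 2| • g (x - b / x)) (Ioi (0:ℝ)) := by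
    rw [← integrableOn_image_iff_integrableOn_abs_deriv_smul measurableSet_Ioi hf' hinj g,
      himg, integrableOn_univ]
    simpa [hg] using integrable_exp_neg_mul_sq (one_pos (α := ℝ))
  have habs : ∀ x ∈ Ioi (0:ℝ), |1 + b / x ^ 2| = 1 + b / x ^ 2 := fun x hx =>
    abs_of_pos (by have := mem_Ioi.mp hx; positivity)
  have hmeas1 : AEStronglyMeasurable (fun x => g (x - b / x))
      (volume.restrict (Ioi (0:ℝ))) := by
    apply Measurable.aestronglyMeasurable
    exact (Real.measurable_exp.comp
      (((measurable_id.sub (measurable_const.div measurable_id)).pow_const 2).neg))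
  have hmeas2 : AEStronglyMeasurable (fun x => (b / x ^ 2) * g (x - b / x))
      (volume.restrict (Ioi (0:ℝ))) := by
    apply Measurable.aestronglyMeasurable
    exact (measurable_const.div (measurable_id.pow_const 2)).mul
      (Real.measurable_exp.comp
        (((measurable_id.sub (measurable_const.div measurable_id)).pow_const 2).neg))
  have hgpos : ∀ v : ℝ, 0 < g v := fun v => Real.exp_pos _
  have hI_int : IntegrableOn (fun x => g (x - b / x)) (Ioi (0:ℝ)) := by
    apply hKint.mono' hmeas1
    rw [ae_restrict_iff' measurableSet_Ioi]
    refine Filter.Eventually.of_forall fun x hx => ?_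
    have hx' := mem_Ioi.mp hx
    rw [habs x hx, smul_eq_mul, Real.norm_eq_abs, abs_of_pos (hgpos _)]
    nlinarith [hgpos (x - b / x), div_nonneg hb.le (sq_nonneg x)]
  have hJ_int : IntegrableOn (fun x => (b / x ^ 2) * g (x - b / x)) (Ioi (0:ℝ)) := by
    apply hKint.mono' hmeas2
    rw [ae_restrict_iff' measurableSet_Ioi]
    refine Filter.Eventually.of_forall fun x hx => ?_
    have hx' := mem_Ioi.mp hx
    rw [habs x hx, smul_eq_mul, Real.norm_eq_abs,
      abs_of_nonneg (mul_nonneg (div_nonneg hb.le (sq_nonneg x)) (hgpos _).le)]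
    nlinarith [hgpos (x - b / x), div_nonneg hb.le (sq_nonneg x)]
  -- I = J via x ↦ b / x
  have hf2 : ∀ x ∈ Ioi (0:ℝ), HasDerivWithinAt (fun x => b / x)
      (-(b / x ^ 2)) (Ioi 0) x := by
    intro x hx
    have hx0 : x ≠ 0 := (mem_Ioi.mp hx).ne'
    have h1 : HasDerivAt (fun x : ℝ => b * x⁻¹) (b * (-(x ^ 2)⁻¹)) x :=
      (hasDerivAt_inv hx0).const_mul b
    have hfeq : (fun x : ℝ => b / x) = fun x : ℝ => b * x⁻¹ :=
      funext fun y => by rw [div_eq_mul_inv]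
    have hveq : -(b / x ^ 2) = b * (-(x ^ 2)⁻¹) := by ring
    rw [hfeq, hveq]
    exact h1.hasDerivWithinAt
  have hinj2 : InjOn (fun x => b / x) (Ioi (0:ℝ)) := by
    intro x hx y hy h
    have hx0 : x ≠ 0 := (mem_Ioi.mp hx).ne'
    have hy0 : y ≠ 0 := (mem_Ioi.mp hy).ne'
    simp only at h
    rw [div_eq_div_iff hx0 hy0] at h
    exact (mul_left_cancel₀ hb.ne' h).symm
  have himg2 : (fun x => b / x) '' Ioi (0:ℝ) = Ioi (0:ℝ) := by
    ext y
    simp only [mem_image, mem_Ioi]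
    constructor
    · rintro ⟨x, hx, rfl⟩; exact div_pos hb hx
    · intro hy; exact ⟨b / y, div_pos hb hy, by field_simp⟩
  have hIJ := integral_image_eq_integral_abs_deriv_smul measurableSet_Ioi hf2 hinj2
    (fun x => g (x - b / x))
  rw [himg2] at hIJ
  have hIJ' : ∫ x in Ioi (0:ℝ), g (x - b / x)
      = ∫ x in Ioi (0:ℝ), (b / x ^ 2) * g (x - b / x) := by
    rw [hIJ]
    apply setIntegral_congr_fun measurableSet_Ioi
    intro x hx
    have hx' := mem_Ioi.mp hx
    have hx0 : x ≠ 0 := hx'.ne'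
    have h1 : |(-(b / x ^ 2))| = b / x ^ 2 := by
      rw [abs_neg]; exact abs_of_pos (by positivity)
    have h2 : b / x - b / (b / x) = -(x - b / x) := by field_simp; ring
    simp only [smul_eq_mul, h1, h2, hg]
    ring_nf
  -- combine
  have hsplit : ∫ x in Ioi (0:ℝ), |1 + b / x ^ 2| • g (x - b / x)
      = (∫ x in Ioi (0:ℝ), g (x - b / x))
        + ∫ x in Ioi (0:ℝ), (b / x ^ 2) * g (x - b / x) := by
    rw [← integral_add hI_int hJ_int]
    apply setIntegral_congr_fun measurableSet_Ioi
    intro x hx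
    simp only [smul_eq_mul]
    rw [habs x hx]
    ring
  have h2I : 2 * ∫ x in Ioi (0:ℝ), g (x - b / x) = Real.sqrt π := by
    rw [hK, hsplit, ← hIJ']; ring
  linarith [h2I]

lemma glasser {b : ℝ} (hb : 0 < b) :
    ∫ x in Ioi (0:ℝ), Real.exp (-x ^ 2 - b ^ 2 / x ^ 2) =
      Real.sqrt π / 2 * Real.exp (-2 * b) := by
  have h1 : ∫ x in Ioi (0:ℝ), Real.exp (-x ^ 2 - b ^ 2 / x ^ 2)
      = ∫ x in Ioi (0:ℝ), Real.exp (-2 * b) * Real.exp (-(x - b / x) ^ 2) := by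
    apply setIntegral_congr_fun measurableSet_Ioi
    intro x hx
    have hx0 : x ≠ 0 := (mem_Ioi.mp hx).ne'
    dsimp only
    rw [← Real.exp_add]
    congr 1
    field_simp
    ring
  rw [h1, integral_const_mul, glasser_half hb]
  ring

theorem laplace_transform_erfc (c : ℝ) (hc : 0 < c) :
    ∀ s : ℝ, 0 < s →
      (∫ t in Set.Ioi (0 : ℝ), Real.exp (-s * t) * erfc (Real.sqrt (c / t))) =
        Real.exp (-2 * Real.sqrt (c * s)) / s := by
  intro s hs
  have hπ : (0:ℝ) < Real.sqrt π := Real.sqrt_pos.mpr Real.pi_pos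
  set b : ℝ := Real.sqrt (c * s) with hbdef
  have hb : 0 < b := Real.sqrt_pos.mpr (mul_pos hc hs)
  have hb2 : b ^ 2 = c * s := Real.sq_sqrt (mul_pos hc hs).le
  set S : Set (ℝ × ℝ) := {p | 0 < p.1 ∧ Real.sqrt (c / p.1) < p.2} with hSdef
  have hS : MeasurableSet S := by
    have h1 : MeasurableSet {p : ℝ × ℝ | 0 < p.1} :=
      measurableSet_lt measurable_const measurable_fst
    have h2 : MeasurableSet {p : ℝ × ℝ | Real.sqrt (c / p.1) < p.2} :=
      measurableSet_lt (Real.continuous_sqrt.measurable.comp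
        (measurable_const.div measurable_fst)) measurable_snd
    exact h1.inter h2
  set H : ℝ → ℝ → ℝ := fun t u =>
    S.indicator (fun p => Real.exp (-s * p.1) * Real.exp (-p.2 ^ 2)) (t, u) with hHdef
  have hmeasH : AEStronglyMeasurable (Function.uncurry H)
      ((volume : Measure ℝ).prod volume) := by
    have hfm : Measurable (fun p : ℝ × ℝ => Real.exp (-s * p.1) * Real.exp (-p.2 ^ 2)) := by
      fun_prop
    have : Function.uncurry H
        = S.indicator (fun p => Real.exp (-s * p.1) * Real.exp (-p.2 ^ 2)) := by
      funext p; rfl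
    rw [this]
    exact (hfm.indicator hS).aestronglyMeasurable
  -- sections
  have hsect_t : ∀ t ∈ Ioi (0:ℝ), ∀ u, H t u =
      (Ioi (Real.sqrt (c / t))).indicator
        (fun u => Real.exp (-s * t) * Real.exp (-u ^ 2)) u := by
    intro t ht u
    by_cases h : Real.sqrt (c / t) < u
    · rw [Set.indicator_of_mem (mem_Ioi.mpr h)]
      exact Set.indicator_of_mem (show (t, u) ∈ S from ⟨ht, h⟩) _
    · rw [Set.indicator_of_notMem (by simpa using h)]
      exact Set.indicator_of_notMem (fun hmem => h hmem.2) _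
  have hsect_t0 : ∀ t ∉ Ioi (0:ℝ), ∀ u, H t u = 0 := fun t ht u =>
    Set.indicator_of_notMem (fun hmem => ht hmem.1) _
  have hsect_u : ∀ u ∈ Ioi (0:ℝ), ∀ t, H t u =
      (Ioi (c / u ^ 2)).indicator
        (fun t => Real.exp (-s * t) * Real.exp (-u ^ 2)) t := by
    intro u hu t
    have hu' : (0:ℝ) < u := hu
    have hiff : t ∈ Ioi (c / u ^ 2) ↔ ((t, u) ∈ S) := by
      simp only [mem_Ioi, hSdef, Set.mem_setOf_eq]
      constructor
      · intro h
        have ht : 0 < t := lt_trans (by positivity) h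
        refine ⟨ht, ?_⟩
        rw [Real.sqrt_lt' hu']
        rw [div_lt_iff₀ ht]
        rw [div_lt_iff₀ (by positivity : (0:ℝ) < u ^ 2)] at h
        linarith
      · rintro ⟨ht, h⟩
        rw [Real.sqrt_lt' hu', div_lt_iff₀ ht] at h
        rw [div_lt_iff₀ (by positivity : (0:ℝ) < u ^ 2)]
        linarith
    by_cases h : t ∈ Ioi (c / u ^ 2)
    · rw [Set.indicator_of_mem h]
      exact Set.indicator_of_mem (hiff.mp h) _
    · rw [Set.indicator_of_notMem h]
      exact Set.indicator_of_notMem (fun hmem => h (hiff.mpr hmem)) _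
  have hsect_u0 : ∀ u ∉ Ioi (0:ℝ), ∀ t, H t u = 0 := by
    intro u hu t
    refine Set.indicator_of_notMem (fun hmem => ?_) _
    exact hu (mem_Ioi.mpr (lt_of_le_of_lt (Real.sqrt_nonneg _) hmem.2))
  -- exponential integral
  have hexpint : ∀ a : ℝ, ∫ t in Ioi a, Real.exp (-s * t) = Real.exp (-s * a) / s := by
    intro a
    have := integral_comp_mul_left_Ioi (fun x => Real.exp (-x)) a hs
    rw [integral_exp_neg_Ioi] at this
    simpa [neg_mul, smul_eq_mul, div_eq_inv_mul] using this
  have hHnn : ∀ t u, 0 ≤ H t u := fun t u =>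
    Set.indicator_nonneg (fun p _ => by positivity) _
  -- inner integral in t
  have hinner : ∀ u : ℝ, (∫ t, H t u) = (Ioi (0:ℝ)).indicator
      (fun u => Real.exp (-s * (c / u ^ 2)) / s * Real.exp (-u ^ 2)) u := by
    intro u
    by_cases hu : u ∈ Ioi (0:ℝ)
    · rw [Set.indicator_of_mem hu]
      have h1 : (fun t => H t u) = (Ioi (c / u ^ 2)).indicator
          (fun t => Real.exp (-s * t) * Real.exp (-u ^ 2)) := funext (hsect_u u hu)
      rw [h1, integral_indicator measurableSet_Ioi, integral_mul_const, hexpint]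
    · rw [Set.indicator_of_notMem hu]
      have h1 : (fun t => H t u) = fun _ => (0:ℝ) := funext fun t => hsect_u0 u hu t
      rw [h1, integral_zero]
  have hinner_norm : ∀ u : ℝ, (∫ t, ‖H t u‖) = ∫ t, H t u := by
    intro u
    have : (fun t => ‖H t u‖) = fun t => H t u :=
      funext fun t => Real.norm_of_nonneg (hHnn t u)
    rw [this]
  have hgauss_int : Integrable (fun u : ℝ => Real.exp (-u ^ 2)) := by
    simpa using integrable_exp_neg_mul_sq (one_pos (α := ℝ))
  -- integrability on the product
  have hintH : Integrable (Function.uncurry H) ((volume : Measure ℝ).prod volume) := by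
    rw [integrable_prod_iff' hmeasH]
    constructor
    · refine Filter.Eventually.of_forall fun u => ?_
      by_cases hu : u ∈ Ioi (0:ℝ)
      · have h1 : (fun t => H t u) = (Ioi (c / u ^ 2)).indicator
            (fun t => Real.exp (-s * t) * Real.exp (-u ^ 2)) := funext (hsect_u u hu)
        show Integrable (fun t => H t u) volume
        rw [h1]
        exact (integrable_indicator_iff measurableSet_Ioi).mpr
          ((exp_neg_integrableOn_Ioi _ hs).mul_const _)
      · have h1 : (fun t => H t u) = fun _ => (0:ℝ) := funext fun t => hsect_u0 u hu t
        show Integrable (fun t => H t u) volume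
        rw [h1]
        exact integrable_zero _ _ _
    · have heq : (fun u => ∫ t, ‖Function.uncurry H (t, u)‖) = (Ioi (0:ℝ)).indicator
          (fun u => Real.exp (-s * (c / u ^ 2)) / s * Real.exp (-u ^ 2)) := by
        funext u
        exact (hinner_norm u).trans (hinner u)
      rw [heq]
      have hdom : IntegrableOn
          (fun u : ℝ => Real.exp (-s * (c / u ^ 2)) / s * Real.exp (-u ^ 2))
          (Ioi 0) := by
        apply Integrable.mono' ((hgauss_int.const_mul s⁻¹).integrableOn)
        · exact Measurable.aestronglyMeasurable (by fun_prop)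
        · rw [ae_restrict_iff' measurableSet_Ioi]
          refine Filter.Eventually.of_forall fun u hu => ?_
          rw [Real.norm_of_nonneg (by positivity)]
          have h1 : Real.exp (-s * (c / u ^ 2)) ≤ 1 := by
            rw [Real.exp_le_one_iff]
            have hu' : (0:ℝ) < u := hu
            have : 0 ≤ s * (c / u ^ 2) := by positivity
            linarith
          rw [div_eq_mul_inv]
          calc Real.exp (-s * (c / u ^ 2)) * s⁻¹ * Real.exp (-u ^ 2)
              = Real.exp (-s * (c / u ^ 2)) * (s⁻¹ * Real.exp (-u ^ 2)) := by ring
            _ ≤ 1 * (s⁻¹ * Real.exp (-u ^ 2)) :=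
                mul_le_mul_of_nonneg_right h1 (by positivity)
            _ = s⁻¹ * Real.exp (-u ^ 2) := one_mul _
      exact (integrable_indicator_iff measurableSet_Ioi).mpr hdom
  -- pointwise rewriting of the integrand
  have hpt : ∀ t ∈ Ioi (0:ℝ), Real.exp (-s * t) * erfc (Real.sqrt (c / t))
      = (2 / Real.sqrt π) * ∫ u, H t u := by
    intro t ht
    have h1 : (fun u => H t u) = (Ioi (Real.sqrt (c / t))).indicator
        (fun u => Real.exp (-s * t) * Real.exp (-u ^ 2)) := funext (hsect_t t ht)
    rw [h1, integral_indicator measurableSet_Ioi, integral_const_mul, erfc]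
    ring
  calc (∫ t in Ioi (0:ℝ), Real.exp (-s * t) * erfc (Real.sqrt (c / t)))
      = ∫ t in Ioi (0:ℝ), (2 / Real.sqrt π) * ∫ u, H t u :=
        setIntegral_congr_fun measurableSet_Ioi hpt
    _ = (2 / Real.sqrt π) * ∫ t in Ioi (0:ℝ), ∫ u, H t u := integral_const_mul _ _
    _ = (2 / Real.sqrt π) * ∫ t, ∫ u, H t u := by
        rw [setIntegral_eq_integral_of_forall_compl_eq_zero (fun t ht => by
          have h1 : (fun u => H t u) = fun _ => (0:ℝ) := funext fun u => hsect_t0 t ht u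
          rw [h1, integral_zero])]
    _ = (2 / Real.sqrt π) * ∫ u, ∫ t, H t u := by rw [integral_integral_swap hintH]
    _ = (2 / Real.sqrt π) * ∫ u, (Ioi (0:ℝ)).indicator
          (fun u => Real.exp (-s * (c / u ^ 2)) / s * Real.exp (-u ^ 2)) u := by
        simp only [hinner]
    _ = (2 / Real.sqrt π) * ∫ u in Ioi (0:ℝ),
          Real.exp (-s * (c / u ^ 2)) / s * Real.exp (-u ^ 2) := by
        rw [integral_indicator measurableSet_Ioi]
    _ = (2 / Real.sqrt π) * ((1 / s) * ∫ u in Ioi (0:ℝ),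
          Real.exp (-u ^ 2 - b ^ 2 / u ^ 2)) := by
        congr 1
        rw [← integral_const_mul]
        apply setIntegral_congr_fun measurableSet_Ioi
        intro u hu
        have hu0 : u ≠ 0 := (mem_Ioi.mp hu).ne'
        have hexp : -u ^ 2 - b ^ 2 / u ^ 2 = -s * (c / u ^ 2) + -u ^ 2 := by
          rw [hb2]; field_simp; ring
        dsimp only
        rw [hexp, Real.exp_add]
        ring
    _ = Real.exp (-2 * b) / s := by
        rw [glasser hb]
        field_simp

end Aux
end

section
/- For uniform resetting on [0, 2/r] and diffusive first passage F_τ(t) = erfc(√(L²/(4Dt))), the success probability equals p = ∫₀^{2/r} erfc(√(L²/(4Dt))) (r/2) dt = (1 + rL²/(4D)) erfc(√(rL²/(8D))) − √(rL²/(2πD)) e^{−rL²/(8D)}. -/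
open MeasureTheory Real

lemma gauss_int (z : ℝ) : IntegrableOn (fun u : ℝ => Real.exp (-u ^ 2)) (Set.Ioi z) := by
  have := (integrable_exp_neg_mul_sq (b := 1) one_pos).integrableOn (s := Set.Ioi z)
  simpa using this

lemma gauss_cont : Continuous (fun u : ℝ => Real.exp (-u ^ 2)) := by continuity

lemma erfc_eq (z : ℝ) : erfc z = 1 - (2 / Real.sqrt π) * ∫ u in (0:ℝ)..z, Real.exp (-u ^ 2) := by
  have h0 : (∫ u in Set.Ioi (0:ℝ), Real.exp (-u ^ 2)) = Real.sqrt π / 2 := by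
    simpa using integral_gaussian_Ioi 1
  have key : (∫ u in (0:ℝ)..z, Real.exp (-u ^ 2)) + (∫ u in Set.Ioi z, Real.exp (-u ^ 2))
      = ∫ u in Set.Ioi (0:ℝ), Real.exp (-u ^ 2) := by
    rcases le_or_gt 0 z with hz | hz
    · rw [intervalIntegral.integral_of_le hz, ← MeasureTheory.setIntegral_union
        (Set.Ioc_disjoint_Ioi le_rfl) measurableSet_Ioi
        ((gauss_int 0).mono_set Set.Ioc_subset_Ioi_self) (gauss_int z),
        Set.Ioc_union_Ioi_eq_Ioi hz]
    · have hu : (∫ u in Set.Ioc z 0, Real.exp (-u ^ 2)) + (∫ u in Set.Ioi (0:ℝ), Real.exp (-u ^ 2))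
          = ∫ u in Set.Ioi z, Real.exp (-u ^ 2) := by
        rw [← MeasureTheory.setIntegral_union (Set.Ioc_disjoint_Ioi le_rfl) measurableSet_Ioi
          ((gauss_int z).mono_set Set.Ioc_subset_Ioi_self) (gauss_int 0),
          Set.Ioc_union_Ioi_eq_Ioi hz.le]
      rw [intervalIntegral.integral_of_ge hz.le]
      linarith
  have hpi : Real.sqrt π ≠ 0 := by positivity
  have h2 : (∫ u in Set.Ioi z, Real.exp (-u ^ 2))
      = Real.sqrt π / 2 - ∫ u in (0:ℝ)..z, Real.exp (-u ^ 2) := by linarith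
  rw [erfc, h2]; field_simp

lemma erfc_hasDerivAt (z : ℝ) :
    HasDerivAt erfc (-(2 / Real.sqrt π) * Real.exp (-z ^ 2)) z := by
  have h : HasDerivAt (fun x => ∫ u in (0:ℝ)..x, Real.exp (-u ^ 2)) (Real.exp (-z ^ 2)) z :=
    intervalIntegral.integral_hasDerivAt_right
      (gauss_cont.intervalIntegrable 0 z)
      (gauss_cont.stronglyMeasurableAtFilter _ _) gauss_cont.continuousAt
  have h2 : HasDerivAt (fun x => 1 - (2 / Real.sqrt π) * ∫ u in (0:ℝ)..x, Real.exp (-u ^ 2))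
      (-(2 / Real.sqrt π) * Real.exp (-z ^ 2)) z := by
    simpa using ((h.const_mul (2 / Real.sqrt π)).const_sub 1)
  exact h2.congr_of_eventuallyEq (Filter.Eventually.of_forall fun x => erfc_eq x)

lemma erfc_nonneg {z : ℝ} : 0 ≤ erfc z := by
  apply mul_nonneg (by positivity)
  exact MeasureTheory.setIntegral_nonneg measurableSet_Ioi (fun u _ => (Real.exp_pos _).le)

lemma erfc_le_one {z : ℝ} (hz : 0 ≤ z) : erfc z ≤ 1 := by
  have h0 : (∫ u in Set.Ioi (0:ℝ), Real.exp (-u ^ 2)) = Real.sqrt π / 2 := by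
    simpa using integral_gaussian_Ioi 1
  have hm : (∫ u in Set.Ioi z, Real.exp (-u ^ 2)) ≤ ∫ u in Set.Ioi (0:ℝ), Real.exp (-u ^ 2) := by
    apply MeasureTheory.setIntegral_mono_set (gauss_int 0)
      (Filter.Eventually.of_forall fun u => (Real.exp_pos _).le)
    exact HasSubset.Subset.eventuallyLE (Set.Ioi_subset_Ioi hz)
  have hpi : (0:ℝ) < Real.sqrt π := by positivity
  rw [erfc]
  rw [h0] at hm
  calc (2 / Real.sqrt π) * ∫ u in Set.Ioi z, Real.exp (-u ^ 2)
      ≤ (2 / Real.sqrt π) * (Real.sqrt π / 2) := by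
        apply mul_le_mul_of_nonneg_left hm (by positivity)
    _ = 1 := by field_simp

lemma erfc_tendsto_zero : Filter.Tendsto erfc Filter.atTop (nhds 0) := by
  have h0 : (∫ u in Set.Ioi (0:ℝ), Real.exp (-u ^ 2)) = Real.sqrt π / 2 := by
    simpa using integral_gaussian_Ioi 1
  have h := MeasureTheory.intervalIntegral_tendsto_integral_Ioi 0 (gauss_int 0)
    (Filter.tendsto_id (α := ℝ))
  have hpi : Real.sqrt π ≠ 0 := by positivity
  have h2 : Filter.Tendsto erfc Filter.atTop
      (nhds (1 - (2 / Real.sqrt π) * (Real.sqrt π / 2))) := by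
    apply Filter.Tendsto.congr (fun z => (erfc_eq z).symm)
    rw [← h0]
    simpa using (tendsto_const_nhds (x := (1:ℝ)) (f := Filter.atTop (α := ℝ))).sub
      (h.const_mul (2 / Real.sqrt π))
  have hz : (1 - (2 / Real.sqrt π) * (Real.sqrt π / 2)) = 0 := by field_simp; ring
  rwa [hz] at h2

lemma erfc_continuous : Continuous erfc :=
  continuous_iff_continuousAt.mpr fun z => (erfc_hasDerivAt z).differentiableAt.continuousAt

lemma key_integral {a T : ℝ} (ha : 0 < a) (hT : 0 < T) :
    (∫ t in Set.Ioc (0:ℝ) T, erfc (Real.sqrt a * (Real.sqrt t)⁻¹)) =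
      (T + 2*a) * erfc (Real.sqrt a * (Real.sqrt T)⁻¹)
        - (2 / Real.sqrt π) * Real.sqrt a * Real.sqrt T * Real.exp (-(a * T⁻¹)) := by
  set F : ℝ → ℝ := fun t => (t + 2*a) * erfc (Real.sqrt a * (Real.sqrt t)⁻¹)
      - (2 / Real.sqrt π) * Real.sqrt a * Real.sqrt t * Real.exp (-(a * t⁻¹)) with hF
  have hpi : (0:ℝ) < Real.sqrt π := by positivity
  have hsa : (0:ℝ) < Real.sqrt a := Real.sqrt_pos.mpr ha
  have hderiv : ∀ t ∈ Set.Ioi (0:ℝ), HasDerivAt F (erfc (Real.sqrt a * (Real.sqrt t)⁻¹)) t := by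
    intro t ht
    rw [Set.mem_Ioi] at ht
    have hst : (0:ℝ) < Real.sqrt t := Real.sqrt_pos.mpr ht
    have h1 : HasDerivAt (fun x : ℝ => Real.sqrt x) (1 / (2 * Real.sqrt t)) t :=
      Real.hasDerivAt_sqrt ht.ne'
    have h2 : HasDerivAt (fun x : ℝ => Real.sqrt a * (Real.sqrt x)⁻¹)
        (Real.sqrt a * (-(1 / (2 * Real.sqrt t)) / (Real.sqrt t) ^ 2)) t :=
      (h1.inv hst.ne').const_mul _
    have h3 := (erfc_hasDerivAt (Real.sqrt a * (Real.sqrt t)⁻¹)).comp t h2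
    have h4 : HasDerivAt (fun x : ℝ => (x + 2*a)) 1 t := (hasDerivAt_id t).add_const _
    have h5 := h4.mul h3
    have h6 : HasDerivAt (fun x : ℝ => -(a * x⁻¹)) (-(a * -(t ^ 2)⁻¹)) t :=
      ((hasDerivAt_inv ht.ne').const_mul a).neg
    have h7 := h6.exp
    have h8 := (h1.const_mul ((2 / Real.sqrt π) * Real.sqrt a)).mul h7
    have h9 := h5.sub h8
    have harg : (Real.sqrt a * (Real.sqrt t)⁻¹) ^ 2 = a * t⁻¹ := by
      rw [mul_pow, inv_pow, Real.sq_sqrt ha.le, Real.sq_sqrt ht.le]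
    rw [harg] at h9
    convert h9 using 1
    · rfl
    · rfl
    · rfl
    simp only [Function.comp_apply]
    obtain ⟨s, hs0, rfl⟩ : ∃ s, 0 < s ∧ s ^ 2 = t := ⟨_, hst, Real.sq_sqrt ht.le⟩
    rw [Real.sqrt_sq hs0.le]
    field_simp
    ring
  have hbound : MeasureTheory.IntegrableOn
      (fun t => erfc (Real.sqrt a * (Real.sqrt t)⁻¹)) (Set.Ioc (0:ℝ) T) := by
    apply MeasureTheory.Measure.integrableOn_of_bounded (M := 1) measure_Ioc_lt_top.ne
    · exact (erfc_continuous.measurable.comp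
        ((Real.continuous_sqrt.measurable.inv).const_mul (Real.sqrt a))).aestronglyMeasurable
    · rw [MeasureTheory.ae_restrict_iff' measurableSet_Ioc]
      refine Filter.Eventually.of_forall fun t ht => ?_
      have h1 : (0:ℝ) ≤ Real.sqrt a * (Real.sqrt t)⁻¹ := by positivity
      rw [Real.norm_eq_abs, abs_of_nonneg erfc_nonneg]
      exact erfc_le_one h1
  have hs1 : Filter.Tendsto (fun t : ℝ => Real.sqrt t) (nhdsWithin 0 (Set.Ioi 0)) (nhds 0) :=
    (Real.continuous_sqrt.tendsto' 0 0 Real.sqrt_zero).mono_left nhdsWithin_le_nhds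
  have hsqrt : Filter.Tendsto (fun t : ℝ => Real.sqrt t) (nhdsWithin 0 (Set.Ioi 0))
      (nhdsWithin 0 (Set.Ioi 0)) := by
    rw [tendsto_nhdsWithin_iff]
    exact ⟨hs1, eventually_mem_nhdsWithin.mono fun t ht => Real.sqrt_pos.mpr ht⟩
  have hatTop : Filter.Tendsto (fun t : ℝ => Real.sqrt a * (Real.sqrt t)⁻¹)
      (nhdsWithin 0 (Set.Ioi 0)) Filter.atTop :=
    Filter.Tendsto.const_mul_atTop hsa (tendsto_inv_nhdsGT_zero.comp hsqrt)
  have herfc0 : Filter.Tendsto (fun t : ℝ => erfc (Real.sqrt a * (Real.sqrt t)⁻¹))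
      (nhdsWithin 0 (Set.Ioi 0)) (nhds 0) := erfc_tendsto_zero.comp hatTop
  have hlin : Filter.Tendsto (fun t : ℝ => t + 2*a) (nhdsWithin 0 (Set.Ioi 0))
      (nhds (0 + 2*a)) :=
    ((continuous_id.add continuous_const).tendsto 0).mono_left nhdsWithin_le_nhds
  have hexp0 : Filter.Tendsto (fun t : ℝ => Real.exp (-(a * t⁻¹)))
      (nhdsWithin 0 (Set.Ioi 0)) (nhds 0) :=
    Real.tendsto_exp_neg_atTop_nhds_zero.comp
      (Filter.Tendsto.const_mul_atTop ha tendsto_inv_nhdsGT_zero)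
  have hzero : Filter.Tendsto F (nhdsWithin 0 (Set.Ioi 0)) (nhds 0) := by
    have := (hlin.mul herfc0).sub
      (((hs1.const_mul ((2 / Real.sqrt π) * Real.sqrt a)).mul hexp0))
    simpa [hF] using this
  have hTlim : Filter.Tendsto F (nhdsWithin T (Set.Iio T)) (nhds (F T)) :=
    (hderiv T hT).continuousAt.continuousWithinAt
  have hii : IntervalIntegrable (fun t => erfc (Real.sqrt a * (Real.sqrt t)⁻¹)) volume 0 T := by
    rw [intervalIntegrable_iff, Set.uIoc_of_le hT.le]
    exact hbound
  have hftc := intervalIntegral.integral_eq_sub_of_hasDerivAt_of_tendsto hT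
    (fun x hx => hderiv x hx.1) hii hzero hTlim
  rw [intervalIntegral.integral_of_le hT.le] at hftc
  rw [hftc, sub_zero]

theorem uniform_reset_success_prob (L D r : ℝ) (hL : 0 < L) (hD : 0 < D) (hr : 0 < r) :
    (∫ t in Set.Ioc (0 : ℝ) (2 / r),
        erfc (Real.sqrt (L ^ 2 / (4 * D * t))) * (r / 2)) =
      (1 + r * L ^ 2 / (4 * D)) * erfc (Real.sqrt (r * L ^ 2 / (8 * D))) -
        Real.sqrt (r * L ^ 2 / (2 * π * D)) * Real.exp (-r * L ^ 2 / (8 * D)) := by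
  set a := L ^ 2 / (4 * D) with hadef
  have ha : 0 < a := by positivity
  set T := 2 / r with hTdef
  have hT : 0 < T := by positivity
  have hcongr : Set.EqOn (fun t => erfc (Real.sqrt (L ^ 2 / (4 * D * t))) * (r / 2))
      (fun t => erfc (Real.sqrt a * (Real.sqrt t)⁻¹) * (r / 2)) (Set.Ioc (0:ℝ) T) := by
    intro t ht
    have ht0 : 0 < t := ht.1
    simp only
    congr 2
    rw [show L ^ 2 / (4 * D * t) = a / t by rw [hadef]; field_simp,
      Real.sqrt_div ha.le, div_eq_mul_inv]
  rw [MeasureTheory.setIntegral_congr_fun measurableSet_Ioc hcongr,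
    MeasureTheory.integral_mul_const, key_integral ha hT]
  have e1 : Real.sqrt (r * L ^ 2 / (8 * D)) = Real.sqrt a * (Real.sqrt T)⁻¹ := by
    rw [show r * L ^ 2 / (8 * D) = a / T by rw [hadef, hTdef]; field_simp; ring,
      Real.sqrt_div ha.le, div_eq_mul_inv]
  have e2 : -r * L ^ 2 / (8 * D) = -(a * T⁻¹) := by
    rw [hadef, hTdef]; field_simp; ring
  have e3 : Real.sqrt (r * L ^ 2 / (2 * π * D))
      = (2 / Real.sqrt π) * Real.sqrt a * Real.sqrt T * (r / 2) := by
    have hp : Real.sqrt π ^ 2 = π := Real.sq_sqrt pi_pos.le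
    have h1 : Real.sqrt a ^ 2 = a := Real.sq_sqrt ha.le
    have h2 : Real.sqrt T ^ 2 = T := Real.sq_sqrt hT.le
    have h : r * L ^ 2 / (2 * π * D)
        = ((2 / Real.sqrt π) * Real.sqrt a * Real.sqrt T * (r / 2)) ^ 2 := by
      rw [mul_pow, mul_pow, mul_pow, div_pow, div_pow, hp, h1, h2, hadef, hTdef]
      have hπ : (0:ℝ) < π := pi_pos
      field_simp
      ring
    rw [h, Real.sqrt_sq (by positivity)]
  have e4 : (1 + r * L ^ 2 / (4 * D)) = (T + 2 * a) * (r / 2) := by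
    rw [hadef, hTdef]; field_simp
  rw [e1, e2, e3, e4]
  ring
end
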